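/- arXiv:1902.07018 — 3 statements merged into one kernel-verified Lean document; each statement's English description precedes it below -/
import Mathlib

section
/- For every fixed integer k ≥ 2, R_ℓ(rK_2, k) = 2r + o(r) as r → ∞; that is, for every ε > 0 there exists r_0 such that for all integers r ≥ r_0, 2r ≤ R_ℓ(rK_2, k) ≤ (2 + ε)·r. -/
/-- The matching `rK₂` consisting of `r` pairwise disjoint edges `{2i, 2i+1}`. -/
def matchingGraph (r : ℕ) : SimpleGraph (Fin (2 * r)) :=
  SimpleGraph.fromRel (fun a b => (b : ℕ) = (a : ℕ) + 1 ∧ (a : ℕ) % 2 = 0)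

/-- A colouring `c` of the edges of the complete graph on `Fin n` contains a
monochromatic copy of the graph `G`. -/
def HasMonoCopy {α β : Type*} (G : SimpleGraph α) {n : ℕ} (c : Sym2 (Fin n) → β) : Prop :=
  ∃ (f : α → Fin n) (x : β), Function.Injective f ∧
    ∀ a b, G.Adj a b → c s(f a, f b) = x

/-- The `k`-colour list Ramsey number of a graph `G`: the least `n` for which one can
assign a list of `k` colours to each edge of `K_n` so that every colouring of the edges
from these lists contains a monochromatic copy of `G`. -/
noncomputable def listRamsey {α : Type*} (G : SimpleGraph α) (k : ℕ) : ℕ :=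
  sInf { n : ℕ | ∃ L : Sym2 (Fin n) → Finset ℕ,
    (∀ e : Sym2 (Fin n), ¬ e.IsDiag → (L e).card = k) ∧
    ∀ c : Sym2 (Fin n) → ℕ, (∀ e : Sym2 (Fin n), ¬ e.IsDiag → c e ∈ L e) →
      HasMonoCopy G c }


open Finset


lemma succ_le_add_choose (k a : ℕ) (hk : 1 ≤ k) : a + 1 ≤ k + a.choose k := by
  induction a with
  | zero =>
      have : Nat.choose 0 k = if k = 0 then 1 else 0 := by
        cases k with
        | zero => rfl
        | succ k' => simp
      omega
  | succ a ih =>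
      rcases lt_or_ge (a + 1) k with h | h
      · omega
      · have h1 : 1 ≤ a.choose (k - 1) := Nat.choose_pos (by omega)
        have h2 : (a + 1).choose k = a.choose (k - 1) + a.choose k := by
          cases k with
          | zero => omega
          | succ k' => simp [Nat.choose_succ_succ, Nat.add_comm]
        omega

lemma card_lists_subset {C k : ℕ} (s : Finset (Fin C)) :
    ((univ : Finset {A : Finset (Fin C) // A.card = k}).filter (fun A => A.1 ⊆ s)).card
      = s.card.choose k := by
  classical
  rw [← Finset.card_powersetCard k s]
  apply Finset.card_bij (fun A _ => A.1)
  · intro A hA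
    rw [Finset.mem_powersetCard]
    exact ⟨(Finset.mem_filter.1 hA).2, A.2⟩
  · intro A _ B _ h
    exact Subtype.ext h
  · intro t ht
    rw [Finset.mem_powersetCard] at ht
    exact ⟨⟨t, ht.2⟩, Finset.mem_filter.2 ⟨Finset.mem_univ _, ht.1⟩, rfl⟩

lemma card_edges_through {n : ℕ} (v : Fin n) :
    ((univ : Finset {e : Sym2 (Fin n) // ¬e.IsDiag}).filter (fun e => v ∈ e.1)).card ≤ n - 1 := by
  classical
  have : ((univ : Finset (Fin n)).erase v).card = n - 1 := by
    rw [Finset.card_erase_of_mem (Finset.mem_univ v)]; simp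
  rw [← this]
  apply Finset.card_le_card_of_injOn
    (fun e => if h : v ∈ e.1 then Sym2.Mem.other h else v)
  · intro e he
    have hv : v ∈ e.1 := by simpa using he
    simp only [dif_pos hv]
    exact Finset.mem_erase.2 ⟨Sym2.other_ne e.2 hv, Finset.mem_univ _⟩
  · intro e he f hf h
    have hv : v ∈ e.1 := by simpa using he
    have hw : v ∈ f.1 := by simpa using hf
    simp only [dif_pos hv, dif_pos hw] at h
    apply Subtype.ext
    rw [← Sym2.other_spec hv, ← Sym2.other_spec hw, h]

lemma card_free_edges {n : ℕ} (S : Finset (Fin n)) :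
    (S.card).choose 2 ≤ ((univ : Finset {e : Sym2 (Fin n) // ¬e.IsDiag}).filter
      (fun e => ∀ v ∈ e.1, v ∈ S)).card := by
  classical
  have hcount : Fintype.card {z : Sym2 {v : Fin n // v ∈ S} // ¬z.IsDiag}
      = (S.card).choose 2 := by
    rw [Sym2.card_subtype_not_diag, Fintype.card_coe]
  rw [← hcount, ← Finset.card_univ]
  refine Finset.card_le_card_of_injOn
    (fun z => ⟨z.1.map Subtype.val, by
      rw [Sym2.isDiag_map Subtype.val_injective]; exact z.2⟩) ?_ ?_
  · intro z _
    refine Finset.mem_coe.2 (Finset.mem_filter.2 ⟨Finset.mem_univ _, ?_⟩)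
    intro v hv
    obtain ⟨a, _, rfl⟩ := Sym2.mem_map.1 hv
    exact a.2
  · intro z _ z' _ h
    have h2 := congrArg Subtype.val h
    exact Subtype.ext (Sym2.map.injective Subtype.val_injective h2)

lemma hasMonoCopy_of_matching {n r : ℕ} (c : Sym2 (Fin n) → ℕ) (x : ℕ)
    (M : Finset (Sym2 (Fin n))) (hcard : M.card = r)
    (hnd : ∀ e ∈ M, ¬ e.IsDiag)
    (hdisj : ∀ e ∈ M, ∀ f ∈ M, e ≠ f → ∀ v, v ∈ e → v ∉ f)
    (hcol : ∀ e ∈ M, c e = x) :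
    HasMonoCopy (matchingGraph r) c := by
  classical
  have hsel : ∀ e : Sym2 (Fin n), ¬ e.IsDiag →
      ∃ a b : Fin n, a ≠ b ∧ e = s(a, b) := by
    intro e
    induction e using Sym2.ind with
    | _ a b => intro hd; exact ⟨a, b, by simpa using hd, rfl⟩
  let gg : Fin r → {y // y ∈ M} := fun i => M.equivFin.symm (Fin.cast hcard.symm i)
  let g : Fin r → Sym2 (Fin n) := fun i => (gg i).1
  have hgM : ∀ i, g i ∈ M := fun i => (gg i).2
  have hginj : Function.Injective g := by
    intro i j h
    have : gg i = gg j := Subtype.ext h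
    have := M.equivFin.symm.injective this
    exact Fin.cast_injective _ this
  have hch : ∀ i : Fin r, ∃ a b : Fin n, a ≠ b ∧ g i = s(a, b) :=
    fun i => hsel (g i) (hnd _ (hgM i))
  choose A B hAB hmk using hch
  have hmemA : ∀ i, A i ∈ g i := fun i => by rw [hmk i]; exact Sym2.mem_mk_left _ _
  have hmemB : ∀ i, B i ∈ g i := fun i => by rw [hmk i]; exact Sym2.mem_mk_right _ _
  let f : Fin (2 * r) → Fin n := fun t =>
    if t.1 % 2 = 0 then A ⟨t.1 / 2, by omega⟩ else B ⟨t.1 / 2, by omega⟩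
  have hfg : ∀ t : Fin (2 * r), f t ∈ g ⟨t.1 / 2, by omega⟩ := by
    intro t
    by_cases h : t.1 % 2 = 0
    · simp only [f, if_pos h]; exact hmemA _
    · simp only [f, if_neg h]; exact hmemB _
  refine ⟨f, x, ?_, ?_⟩
  · intro t t' h
    by_cases hi : t.1 / 2 = t'.1 / 2
    · by_cases hp : t.1 % 2 = t'.1 % 2
      · exact Fin.ext (by omega)
      · exfalso
        have hii : (⟨t.1 / 2, by omega⟩ : Fin r) = ⟨t'.1 / 2, by omega⟩ := Fin.ext hi
        rcases Nat.mod_two_eq_zero_or_one t.1 with h0 | h1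
        · have h0' : ¬ (t'.1 % 2 = 0) := by omega
          have : A ⟨t.1 / 2, by omega⟩ = B ⟨t'.1 / 2, by omega⟩ := by
            simpa only [f, if_pos h0, if_neg h0'] using h
          rw [← hii] at this
          exact hAB _ this
        · have h1' : t'.1 % 2 = 0 := by omega
          have h1'' : ¬ (t.1 % 2 = 0) := by omega
          have : B ⟨t.1 / 2, by omega⟩ = A ⟨t'.1 / 2, by omega⟩ := by
            simpa only [f, if_neg h1'', if_pos h1'] using h
          rw [← hii] at this
          exact hAB _ this.symm
    · exfalso
      have hne : g ⟨t.1 / 2, by omega⟩ ≠ g ⟨t'.1 / 2, by omega⟩ := by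
        intro hgg
        exact hi (congrArg Fin.val (hginj hgg))
      have := hdisj _ (hgM ⟨t.1 / 2, by omega⟩) _ (hgM ⟨t'.1 / 2, by omega⟩) hne
        (f t) (hfg t)
      rw [h] at this
      exact this (hfg t')
  · intro a b hab
    rw [matchingGraph, SimpleGraph.fromRel_adj] at hab
    obtain ⟨hne, hcase⟩ := hab
    have hA2 := a.isLt
    have hB2 := b.isLt
    rcases hcase with ⟨hb, ha⟩ | ⟨hb, ha⟩
    · -- (b:ℕ) = a + 1, a even
      have hb1 : ¬ (b.1 % 2 = 0) := by omega
      have hfa : f a = A ⟨a.1 / 2, by omega⟩ := by simp only [f, if_pos ha]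
      have hfb : f b = B ⟨b.1 / 2, by omega⟩ := by simp only [f, if_neg hb1]
      have hii : (⟨b.1 / 2, by omega⟩ : Fin r) = ⟨a.1 / 2, by omega⟩ := by simp only [Fin.mk.injEq]; omega
      rw [hfa, hfb, hii, ← hmk]
      exact hcol _ (hgM _)
    · -- (a:ℕ) = b + 1, b even
      have ha1 : ¬ (a.1 % 2 = 0) := by omega
      have hfa : f a = B ⟨a.1 / 2, by omega⟩ := by simp only [f, if_neg ha1]
      have hfb : f b = A ⟨b.1 / 2, by omega⟩ := by simp only [f, if_pos ha]
      have hii : (⟨a.1 / 2, by omega⟩ : Fin r) = ⟨b.1 / 2, by omega⟩ := by simp only [Fin.mk.injEq]; omega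
      rw [hfa, hfb, hii, Sym2.eq_swap, ← hmk]
      exact hcol _ (hgM _)

lemma forcing {n r k C : ℕ}
    (L : {e : Sym2 (Fin n) // ¬e.IsDiag} → {A : Finset (Fin C) // A.card = k})
    (hL : ∀ T : Fin C → Finset (Fin n), (∀ x, (T x).card ≤ 2 * r - 2) →
        ∃ e, ∀ x ∈ (L e).1, ∀ v ∈ e.1, v ∉ T x)
    (c : Sym2 (Fin n) → ℕ)
    (hc : ∀ e : {e : Sym2 (Fin n) // ¬e.IsDiag}, ∃ x ∈ (L e).1, (x : ℕ) = c e.1) :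
    HasMonoCopy (matchingGraph r) c := by
  classical
  by_contra hno
  have hmem : ∀ z : Sym2 (Fin n), ∃ v : Fin n, v ∈ z := by
    intro z
    induction z using Sym2.ind with
    | _ a b => exact ⟨a, Sym2.mem_mk_left a b⟩
  -- maximal matchings in each colour class
  have key : ∀ x : Fin C, ∃ M : Finset (Sym2 (Fin n)),
      ((∀ e ∈ M, ¬e.IsDiag ∧ c e = (x : ℕ)) ∧
        (∀ e ∈ M, ∀ f ∈ M, e ≠ f → ∀ v, v ∈ e → v ∉ f)) ∧
      (∀ M' : Finset (Sym2 (Fin n)),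
        ((∀ e ∈ M', ¬e.IsDiag ∧ c e = (x : ℕ)) ∧
          (∀ e ∈ M', ∀ f ∈ M', e ≠ f → ∀ v, v ∈ e → v ∉ f)) → M'.card ≤ M.card) := by
    intro x
    have hne : ((univ : Finset (Finset (Sym2 (Fin n)))).filter
        (fun M => (∀ e ∈ M, ¬e.IsDiag ∧ c e = (x : ℕ)) ∧
          (∀ e ∈ M, ∀ f ∈ M, e ≠ f → ∀ v, v ∈ e → v ∉ f))).Nonempty := by
      refine ⟨∅, ?_⟩
      simp
    obtain ⟨M, hM, hmax⟩ := Finset.exists_max_image _ Finset.card hne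
    refine ⟨M, (Finset.mem_filter.1 hM).2, fun M' hM' => ?_⟩
    exact hmax M' (Finset.mem_filter.2 ⟨Finset.mem_univ _, hM'⟩)
  choose Mx hMx hMmax using key
  have hMsmall : ∀ x, (Mx x).card ≤ r - 1 := by
    intro x
    by_contra hbig
    obtain ⟨M', hsub, hcard⟩ := Finset.exists_subset_card_eq
      (show r ≤ (Mx x).card by omega)
    exact hno (hasMonoCopy_of_matching c (x : ℕ) M' hcard
      (fun e he => ((hMx x).1 e (hsub he)).1)
      (fun e he f hf => (hMx x).2 e (hsub he) f (hsub hf))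
      (fun e he => ((hMx x).1 e (hsub he)).2))
  set T : Fin C → Finset (Fin n) :=
    fun x => (Mx x).biUnion (fun e => univ.filter (· ∈ e)) with hT
  have hTcard : ∀ x, (T x).card ≤ 2 * r - 2 := by
    intro x
    calc (T x).card ≤ ∑ e ∈ Mx x, (univ.filter (· ∈ e)).card := Finset.card_biUnion_le
    _ ≤ ∑ _e ∈ Mx x, 2 := by
        refine Finset.sum_le_sum (fun e _ => ?_)
        induction e using Sym2.ind with
        | _ a b =>
          have : (univ.filter (· ∈ s(a, b))) ⊆ {a, b} := by
            intro v hv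
            simp only [Finset.mem_filter, Sym2.mem_iff] at hv
            simp only [Finset.mem_insert, Finset.mem_singleton]
            tauto
          calc (univ.filter (· ∈ s(a, b))).card ≤ ({a, b} : Finset (Fin n)).card :=
                Finset.card_le_card this
          _ ≤ 2 := Finset.card_insert_le a {b} |>.trans (by simp)
    _ = 2 * (Mx x).card := by rw [Finset.sum_const, smul_eq_mul, mul_comm]
    _ ≤ 2 * r - 2 := by have := hMsmall x; omega
  obtain ⟨e, hefree⟩ := hL T hTcard
  obtain ⟨x, hxL, hxc⟩ := hc e
  obtain ⟨v0, hv0⟩ := hmem e.1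
  have hv0T : v0 ∉ T x := hefree x hxL v0 hv0
  have hvertT : ∀ f ∈ Mx x, ∀ v, v ∈ f → v ∈ T x := by
    intro f hf v hv
    exact Finset.mem_biUnion.2 ⟨f, hf, Finset.mem_filter.2 ⟨Finset.mem_univ _, hv⟩⟩
  have henotin : e.1 ∉ Mx x := fun hmem' => hv0T (hvertT _ hmem' _ hv0)
  have hM' : (∀ f ∈ insert e.1 (Mx x), ¬f.IsDiag ∧ c f = (x : ℕ)) ∧
      (∀ f ∈ insert e.1 (Mx x), ∀ g ∈ insert e.1 (Mx x), f ≠ g → ∀ v, v ∈ f → v ∉ g) := by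
    constructor
    · intro f hf
      rcases Finset.mem_insert.1 hf with h | h
      · subst h; exact ⟨e.2, hxc.symm⟩
      · exact (hMx x).1 f h
    · intro f hf g hg hfg v hvf
      rcases Finset.mem_insert.1 hf with h1 | h1 <;>
        rcases Finset.mem_insert.1 hg with h2 | h2
      · exact absurd (h1.trans h2.symm) hfg
      · subst h1
        intro hvg
        exact hefree x hxL v hvf (hvertT _ h2 _ hvg)
      · subst h2
        intro hvg
        exact hefree x hxL v hvg (hvertT _ h1 _ hvf)
      · exact (hMx x).2 f h1 g h2 hfg v hvf
  have hcard' := hMmax x _ hM'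
  rw [Finset.card_insert_of_notMem henotin] at hcard'
  omega

/-- colours free for edge `e` under cover family `T`. -/
def freeFam {n C : ℕ} (T : Fin C → Finset (Fin n)) (e : Sym2 (Fin n)) : Finset (Fin C) :=
  univ.filter (fun x => ∀ v ∈ e, v ∉ T x)

/-- lists that are "hit" by the cover family `T` at edge `e`. -/
def hitLists {n C : ℕ} (k : ℕ) (T : Fin C → Finset (Fin n)) (e : Sym2 (Fin n)) :
    Finset {A : Finset (Fin C) // A.card = k} :=
  univ.filter (fun A => ∃ x ∈ A.1, ∃ v ∈ e, v ∈ T x)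

lemma card_hitLists {n C k : ℕ} (T : Fin C → Finset (Fin n)) (e : Sym2 (Fin n)) :
    (hitLists k T e).card = C.choose k - ((freeFam T e).card).choose k := by
  classical
  have hsplit := Finset.card_filter_add_card_filter_not
    (s := (univ : Finset {A : Finset (Fin C) // A.card = k}))
    (p := fun A => ∃ x ∈ A.1, ∃ v ∈ e, v ∈ T x)
  rw [Finset.card_univ, Fintype.card_finset_len, Fintype.card_fin] at hsplit
  have hcompl : ((univ : Finset {A : Finset (Fin C) // A.card = k}).filter
        (fun A => ¬ ∃ x ∈ A.1, ∃ v ∈ e, v ∈ T x)).card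
      = ((freeFam T e).card).choose k := by
    rw [← card_lists_subset (k := k) (freeFam T e)]
    congr 1
    refine Finset.filter_congr (fun A _ => ?_)
    constructor
    · intro hA x hx
      refine Finset.mem_filter.2 ⟨Finset.mem_univ _, fun v hv hvT => ?_⟩
      exact hA ⟨x, hx, v, hv, hvT⟩
    · rintro hA ⟨x, hx, v, hv, hvT⟩
      exact (Finset.mem_filter.1 (hA hx)).2 v hv hvT
  have hh : (hitLists k T e).card = ((univ : Finset {A : Finset (Fin C) // A.card = k}).filter
      (fun A => ∃ x ∈ A.1, ∃ v ∈ e, v ∈ T x)).card := by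
    rw [hitLists]
  omega

lemma hit_add_free {n C : ℕ} (T : Fin C → Finset (Fin n)) (e : Sym2 (Fin n)) :
    ((univ.filter (fun x => ∃ v ∈ e, v ∈ T x) : Finset (Fin C))).card
      + (freeFam T e).card = C := by
  classical
  have h0 := Finset.card_filter_add_card_filter_not
    (s := (univ : Finset (Fin C))) (p := fun x => ∃ v ∈ e, v ∈ T x)
  rw [Finset.card_univ, Fintype.card_fin] at h0
  have h1 : (freeFam T e).card
      = ((univ : Finset (Fin C)).filter (fun x => ¬ ∃ v ∈ e, v ∈ T x)).card := by
    rw [freeFam]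
    congr 1
    refine Finset.filter_congr (fun x _ => ?_)
    constructor
    · intro hx ⟨v, hv1, hv2⟩; exact hx v hv1 hv2
    · intro hx v hv1 hv2; exact hx ⟨v, hv1, hv2⟩
  omega

lemma exists_good_lists (n r k C : ℕ) (hk : 1 ≤ k) (hkC : k ≤ C)
    (hQ : (Nat.choose C k : ℝ) * (n * C) <
        (C : ℝ) * ((Nat.choose (n - (2 * r - 2)) 2 : ℕ) : ℝ)
          - ((k : ℝ) - 1) * (Nat.choose n 2 : ℝ)) :
    ∃ L : {e : Sym2 (Fin n) // ¬e.IsDiag} → {A : Finset (Fin C) // A.card = k},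
      ∀ T : Fin C → Finset (Fin n), (∀ x, (T x).card ≤ 2 * r - 2) →
        ∃ e, ∀ x ∈ (L e).1, ∀ v ∈ e.1, v ∉ T x := by
  classical
  by_contra hcon
  push_neg at hcon
  have hNpos : 0 < C.choose k := Nat.choose_pos hkC
  have hEval : Fintype.card {e : Sym2 (Fin n) // ¬e.IsDiag} = n.choose 2 := by
    have := Sym2.card_subtype_not_diag (α := Fin n)
    rwa [Fintype.card_fin] at this
  -- the counting: univ is covered by bad events
  have cover : (univ : Finset ({e : Sym2 (Fin n) // ¬e.IsDiag} → {A : Finset (Fin C) // A.card = k})) ⊆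
      (univ.filter (fun T : Fin C → Finset (Fin n) => ∀ x, (T x).card ≤ 2 * r - 2)).biUnion
        (fun T => Fintype.piFinset (fun e => hitLists k T e.1)) := by
    intro L _
    obtain ⟨T, hT1, hT2⟩ := hcon L
    refine Finset.mem_biUnion.2 ⟨T, Finset.mem_filter.2 ⟨Finset.mem_univ _, hT1⟩, ?_⟩
    refine Fintype.mem_piFinset.2 (fun e => Finset.mem_filter.2 ⟨Finset.mem_univ _, ?_⟩)
    obtain ⟨x, hx1, v, hv1, hv2⟩ := hT2 e
    exact ⟨x, hx1, v, hv1, hv2⟩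
  have count1 : ((C.choose k : ℝ)) ^ (n.choose 2) ≤
      ∑ T ∈ univ.filter (fun T : Fin C → Finset (Fin n) => ∀ x, (T x).card ≤ 2 * r - 2),
        ∏ e : {e : Sym2 (Fin n) // ¬e.IsDiag}, ((hitLists k T e.1).card : ℝ) := by
    have h1 := (Finset.card_le_card cover).trans Finset.card_biUnion_le
    rw [Finset.card_univ, Fintype.card_fun, Fintype.card_finset_len, Fintype.card_fin,
      hEval] at h1
    calc ((C.choose k : ℝ)) ^ (n.choose 2) = ((C.choose k ^ n.choose 2 : ℕ) : ℝ) := by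
          push_cast; ring
    _ ≤ _ := by
        refine le_trans (Nat.cast_le.2 h1) ?_
        rw [Nat.cast_sum]
        refine le_of_eq (Finset.sum_congr rfl (fun T _ => ?_))
        rw [Fintype.card_piFinset, Nat.cast_prod]
  -- abbreviations (as plain terms)
  set Q0 : ℝ := (C : ℝ) * ((Nat.choose (n - (2 * r - 2)) 2 : ℕ) : ℝ)
      - ((k : ℝ) - 1) * (Nat.choose n 2 : ℝ) with hQ0
  -- lower bound on sum of free colours, per family
  have sum_free : ∀ T : Fin C → Finset (Fin n), (∀ x, (T x).card ≤ 2 * r - 2) →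
      (C : ℝ) * ((Nat.choose (n - (2 * r - 2)) 2 : ℕ) : ℝ)
        ≤ ∑ e : {e : Sym2 (Fin n) // ¬e.IsDiag}, ((freeFam T e.1).card : ℝ) := by
    intro T hTx
    have hswap : ∑ e : {e : Sym2 (Fin n) // ¬e.IsDiag}, (freeFam T e.1).card
        = ∑ x : Fin C, ((univ : Finset {e : Sym2 (Fin n) // ¬e.IsDiag}).filter
            (fun e => ∀ v ∈ e.1, v ∉ T x)).card := by
      have h1 : ∀ e : {e : Sym2 (Fin n) // ¬e.IsDiag},
          (freeFam T e.1).card = ∑ x : Fin C, if ∀ v ∈ e.1, v ∉ T x then 1 else 0 := by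
        intro e
        rw [freeFam]
        exact Finset.card_filter _ _
      rw [Finset.sum_congr rfl (fun e _ => h1 e), Finset.sum_comm]
      exact Finset.sum_congr rfl (fun x _ => (Finset.card_filter _ _).symm)
    have hx : ∀ x : Fin C, (Nat.choose (n - (2 * r - 2)) 2 : ℕ)
        ≤ ((univ : Finset {e : Sym2 (Fin n) // ¬e.IsDiag}).filter
            (fun e => ∀ v ∈ e.1, v ∉ T x)).card := by
      intro x
      have h1 : ((univ : Finset (Fin n)) \ T x).card = n - (T x).card := by
        rw [Finset.card_sdiff_of_subset (Finset.subset_univ _), Finset.card_univ, Fintype.card_fin]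
      have h2 := card_free_edges ((univ : Finset (Fin n)) \ T x)
      have h3 : ((univ : Finset {e : Sym2 (Fin n) // ¬e.IsDiag}).filter
            (fun e => ∀ v ∈ e.1, v ∈ (univ : Finset (Fin n)) \ T x))
          = ((univ : Finset {e : Sym2 (Fin n) // ¬e.IsDiag}).filter
            (fun e => ∀ v ∈ e.1, v ∉ T x)) := by
        refine Finset.filter_congr (fun e _ => ?_)
        constructor
        · intro h v hv
          have := h v hv
          rw [Finset.mem_sdiff] at this
          exact this.2
        · intro h v hv
          rw [Finset.mem_sdiff]
          exact ⟨Finset.mem_univ _, h v hv⟩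
      rw [h3, h1] at h2
      refine le_trans (Nat.choose_le_choose 2 ?_) h2
      exact Nat.sub_le_sub_left (hTx x) n
    have hsum : C * (Nat.choose (n - (2 * r - 2)) 2 : ℕ)
        ≤ ∑ e : {e : Sym2 (Fin n) // ¬e.IsDiag}, (freeFam T e.1).card := by
      rw [hswap]
      calc C * (Nat.choose (n - (2 * r - 2)) 2 : ℕ)
          = ∑ _x : Fin C, (Nat.choose (n - (2 * r - 2)) 2 : ℕ) := by
            rw [Finset.sum_const, Finset.card_univ, Fintype.card_fin, smul_eq_mul]
      _ ≤ _ := Finset.sum_le_sum (fun x _ => hx x)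
    calc (C : ℝ) * ((Nat.choose (n - (2 * r - 2)) 2 : ℕ) : ℝ)
        = ((C * Nat.choose (n - (2 * r - 2)) 2 : ℕ) : ℝ) := by push_cast; ring
    _ ≤ ((∑ e : {e : Sym2 (Fin n) // ¬e.IsDiag}, (freeFam T e.1).card : ℕ) : ℝ) := by
        exact_mod_cast hsum
    _ = _ := by push_cast; rfl
  -- per-family product bound
  have prodBound : ∀ T : Fin C → Finset (Fin n), (∀ x, (T x).card ≤ 2 * r - 2) →
      ∏ e : {e : Sym2 (Fin n) // ¬e.IsDiag}, ((hitLists k T e.1).card : ℝ)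
        ≤ ((C.choose k : ℝ)) ^ (n.choose 2) * Real.exp (-(Q0 / (C.choose k : ℝ))) := by
    intro T hTx
    have hNR : (0 : ℝ) < (C.choose k : ℝ) := by exact_mod_cast hNpos
    have hfactor : ∀ e : {e : Sym2 (Fin n) // ¬e.IsDiag},
        ((hitLists k T e.1).card : ℝ) ≤ (C.choose k : ℝ)
          * Real.exp (-((((freeFam T e.1).card).choose k : ℝ) / (C.choose k : ℝ))) := by
      intro e
      have h1 : ((freeFam T e.1).card).choose k ≤ C.choose k :=
        Nat.choose_le_choose k ((Finset.card_le_univ _).trans (by simp))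
      have h2 : ((hitLists k T e.1).card : ℝ)
          = (C.choose k : ℝ) - (((freeFam T e.1).card).choose k : ℝ) := by
        rw [card_hitLists]
        push_cast [h1]
        ring
      rw [h2]
      have h3 := Real.add_one_le_exp (-((((freeFam T e.1).card).choose k : ℝ) / (C.choose k : ℝ)))
      have h4 : (1 : ℝ) - (((freeFam T e.1).card).choose k : ℝ) / (C.choose k : ℝ)
          ≤ Real.exp (-((((freeFam T e.1).card).choose k : ℝ) / (C.choose k : ℝ))) := by
        linarith
      calc (C.choose k : ℝ) - (((freeFam T e.1).card).choose k : ℝ)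
          = (C.choose k : ℝ) * (1 - (((freeFam T e.1).card).choose k : ℝ) / (C.choose k : ℝ)) := by
            field_simp
      _ ≤ _ := by
            exact mul_le_mul_of_nonneg_left h4 (le_of_lt hNR)
    have hprod1 : ∏ e : {e : Sym2 (Fin n) // ¬e.IsDiag}, ((hitLists k T e.1).card : ℝ)
        ≤ ∏ e : {e : Sym2 (Fin n) // ¬e.IsDiag}, ((C.choose k : ℝ)
            * Real.exp (-((((freeFam T e.1).card).choose k : ℝ) / (C.choose k : ℝ)))) := by
      refine Finset.prod_le_prod (fun e _ => by positivity) (fun e _ => hfactor e)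
    have hprod2 : ∏ e : {e : Sym2 (Fin n) // ¬e.IsDiag}, ((C.choose k : ℝ)
            * Real.exp (-((((freeFam T e.1).card).choose k : ℝ) / (C.choose k : ℝ))))
        = ((C.choose k : ℝ)) ^ (n.choose 2)
          * Real.exp (∑ e : {e : Sym2 (Fin n) // ¬e.IsDiag},
              -((((freeFam T e.1).card).choose k : ℝ) / (C.choose k : ℝ))) := by
      rw [Finset.prod_mul_distrib, Finset.prod_const, Finset.card_univ, hEval, ← Real.exp_sum]
    have hsumchoose : Q0 ≤ ∑ e : {e : Sym2 (Fin n) // ¬e.IsDiag},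
        ((((freeFam T e.1).card).choose k : ℝ)) := by
      have hpt : ∀ e : {e : Sym2 (Fin n) // ¬e.IsDiag},
          ((freeFam T e.1).card : ℝ) - ((k : ℝ) - 1)
            ≤ (((freeFam T e.1).card).choose k : ℝ) := by
        intro e
        have := succ_le_add_choose k ((freeFam T e.1).card) hk
        have h5 : (((freeFam T e.1).card : ℕ) : ℝ) + 1
            ≤ (k : ℝ) + (((freeFam T e.1).card).choose k : ℝ) := by exact_mod_cast this
        linarith
      have hsum2 : ∑ e : {e : Sym2 (Fin n) // ¬e.IsDiag},
            (((freeFam T e.1).card : ℝ) - ((k : ℝ) - 1))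
          ≤ ∑ e : {e : Sym2 (Fin n) // ¬e.IsDiag}, (((freeFam T e.1).card).choose k : ℝ) :=
        Finset.sum_le_sum (fun e _ => hpt e)
      have hsum3 : ∑ e : {e : Sym2 (Fin n) // ¬e.IsDiag},
            (((freeFam T e.1).card : ℝ) - ((k : ℝ) - 1))
          = (∑ e : {e : Sym2 (Fin n) // ¬e.IsDiag}, ((freeFam T e.1).card : ℝ))
            - ((k : ℝ) - 1) * (n.choose 2 : ℝ) := by
        rw [Finset.sum_sub_distrib, Finset.sum_const, Finset.card_univ, hEval]
        push_cast
        ring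
      have := sum_free T hTx
      rw [hQ0]
      rw [hsum3] at hsum2
      linarith
    have hexp : Real.exp (∑ e : {e : Sym2 (Fin n) // ¬e.IsDiag},
          -((((freeFam T e.1).card).choose k : ℝ) / (C.choose k : ℝ)))
        ≤ Real.exp (-(Q0 / (C.choose k : ℝ))) := by
      rw [Real.exp_le_exp]
      have : ∑ e : {e : Sym2 (Fin n) // ¬e.IsDiag},
          -((((freeFam T e.1).card).choose k : ℝ) / (C.choose k : ℝ))
          = -((∑ e : {e : Sym2 (Fin n) // ¬e.IsDiag},
              (((freeFam T e.1).card).choose k : ℝ)) / (C.choose k : ℝ)) := by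
        rw [Finset.sum_div, Finset.sum_neg_distrib]
      rw [this]
      have hdiv : Q0 / (C.choose k : ℝ) ≤ (∑ e : {e : Sym2 (Fin n) // ¬e.IsDiag},
          (((freeFam T e.1).card).choose k : ℝ)) / (C.choose k : ℝ) := by
        gcongr
      linarith
    calc ∏ e : {e : Sym2 (Fin n) // ¬e.IsDiag}, ((hitLists k T e.1).card : ℝ)
        ≤ _ := hprod1
    _ = _ := hprod2
    _ ≤ ((C.choose k : ℝ)) ^ (n.choose 2) * Real.exp (-(Q0 / (C.choose k : ℝ))) := by
        refine mul_le_mul_of_nonneg_left hexp (by positivity)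
  -- final combination
  have hNR : (0 : ℝ) < (C.choose k : ℝ) := by exact_mod_cast hNpos
  have hfam : ((univ.filter (fun T : Fin C → Finset (Fin n) =>
      ∀ x, (T x).card ≤ 2 * r - 2)).card : ℝ) ≤ (2 : ℝ) ^ (n * C) := by
    have h1 : (univ.filter (fun T : Fin C → Finset (Fin n) =>
        ∀ x, (T x).card ≤ 2 * r - 2)).card ≤ 2 ^ (n * C) := by
      calc _ ≤ (univ : Finset (Fin C → Finset (Fin n))).card := Finset.card_filter_le _ _
      _ = 2 ^ (n * C) := by
          rw [Finset.card_univ, Fintype.card_fun, Fintype.card_finset, Fintype.card_fin,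
            Fintype.card_fin, ← pow_mul]
    exact_mod_cast h1
  have hsum2 : ∑ T ∈ univ.filter (fun T : Fin C → Finset (Fin n) =>
        ∀ x, (T x).card ≤ 2 * r - 2),
      ∏ e : {e : Sym2 (Fin n) // ¬e.IsDiag}, ((hitLists k T e.1).card : ℝ)
      ≤ (2 : ℝ) ^ (n * C) * (((C.choose k : ℝ)) ^ (n.choose 2)
          * Real.exp (-(Q0 / (C.choose k : ℝ)))) := by
    calc _ ≤ ∑ _T ∈ univ.filter (fun T : Fin C → Finset (Fin n) =>
          ∀ x, (T x).card ≤ 2 * r - 2),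
        (((C.choose k : ℝ)) ^ (n.choose 2) * Real.exp (-(Q0 / (C.choose k : ℝ)))) := by
          refine Finset.sum_le_sum (fun T hT => ?_)
          exact prodBound T (Finset.mem_filter.1 hT).2
    _ = ((univ.filter (fun T : Fin C → Finset (Fin n) =>
          ∀ x, (T x).card ≤ 2 * r - 2)).card : ℝ)
          * (((C.choose k : ℝ)) ^ (n.choose 2) * Real.exp (-(Q0 / (C.choose k : ℝ)))) := by
          rw [Finset.sum_const, nsmul_eq_mul]
    _ ≤ _ := by
          refine mul_le_mul_of_nonneg_right hfam (by positivity)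
  have hmain : ((C.choose k : ℝ)) ^ (n.choose 2)
      ≤ (2 : ℝ) ^ (n * C) * (((C.choose k : ℝ)) ^ (n.choose 2)
          * Real.exp (-(Q0 / (C.choose k : ℝ)))) := le_trans count1 hsum2
  have hpow : (0 : ℝ) < ((C.choose k : ℝ)) ^ (n.choose 2) := by positivity
  have h1' : (1 : ℝ) ≤ (2 : ℝ) ^ (n * C) * Real.exp (-(Q0 / (C.choose k : ℝ))) := by
    have hP0 : ((C.choose k : ℝ)) ^ (n.choose 2) ≠ 0 := ne_of_gt hpow
    have h2 := (one_le_div hpow).2 hmain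
    have h3 : (2 : ℝ) ^ (n * C) * (((C.choose k : ℝ)) ^ (n.choose 2)
        * Real.exp (-(Q0 / (C.choose k : ℝ)))) / (((C.choose k : ℝ)) ^ (n.choose 2))
        = (2 : ℝ) ^ (n * C) * Real.exp (-(Q0 / (C.choose k : ℝ))) := by
      field_simp
    rwa [h3] at h2
  have hexpq : Real.exp (Q0 / (C.choose k : ℝ)) ≤ (2 : ℝ) ^ (n * C) := by
    have hee : Real.exp (-(Q0 / (C.choose k : ℝ))) * Real.exp (Q0 / (C.choose k : ℝ)) = 1 := by
      rw [← Real.exp_add, neg_add_cancel, Real.exp_zero]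
    have h4 : Real.exp (Q0 / (C.choose k : ℝ)) * ((2 : ℝ) ^ (n * C)
        * Real.exp (-(Q0 / (C.choose k : ℝ)))) = (2 : ℝ) ^ (n * C) := by
      calc Real.exp (Q0 / (C.choose k : ℝ)) * ((2 : ℝ) ^ (n * C)
          * Real.exp (-(Q0 / (C.choose k : ℝ))))
          = (2 : ℝ) ^ (n * C) * (Real.exp (-(Q0 / (C.choose k : ℝ)))
            * Real.exp (Q0 / (C.choose k : ℝ))) := by ring
      _ = (2 : ℝ) ^ (n * C) := by rw [hee, mul_one]
    calc Real.exp (Q0 / (C.choose k : ℝ)) = Real.exp (Q0 / (C.choose k : ℝ)) * 1 :=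
          (mul_one _).symm
    _ ≤ Real.exp (Q0 / (C.choose k : ℝ)) * ((2 : ℝ) ^ (n * C)
          * Real.exp (-(Q0 / (C.choose k : ℝ)))) :=
          mul_le_mul_of_nonneg_left h1' (le_of_lt (Real.exp_pos _))
    _ = (2 : ℝ) ^ (n * C) := h4
  have h2exp : ((2 : ℝ)) ^ (n * C) ≤ Real.exp ((n * C : ℕ) : ℝ) := by
    have h2e : (2 : ℝ) ≤ Real.exp 1 := by
      have := Real.add_one_le_exp (1 : ℝ)
      linarith
    calc ((2 : ℝ)) ^ (n * C) ≤ (Real.exp 1) ^ (n * C) :=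
          pow_le_pow_left₀ (by norm_num) h2e _
    _ = Real.exp ((n * C : ℕ) : ℝ) := by
        rw [← Real.exp_nat_mul, mul_one]
  have hfin : Q0 / (C.choose k : ℝ) ≤ ((n * C : ℕ) : ℝ) :=
    Real.exp_le_exp.1 (le_trans hexpq h2exp)
  have hfin2 : Q0 ≤ ((n * C : ℕ) : ℝ) * (C.choose k : ℝ) := (div_le_iff₀ hNR).1 hfin
  rw [hQ0] at hfin2 hQ
  push_cast at hfin2
  nlinarith [hfin2, hQ]

set_option maxHeartbeats 1000000 in
theorem list_ramsey_matching_asymp_r (k : ℕ) (hk : 2 ≤ k) (ε : ℝ) (hε : 0 < ε) :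
    ∃ r₀ : ℕ, ∀ r : ℕ, r₀ ≤ r →
      2 * r ≤ listRamsey (matchingGraph r) k ∧
      (listRamsey (matchingGraph r) k : ℝ) ≤ (2 + ε) * r := by
  classical
  set ε' : ℝ := min ε 1 with hε'def
  have hε'pos : 0 < ε' := lt_min hε one_pos
  have hε'le1 : ε' ≤ 1 := min_le_right _ _
  have hε'leε : ε' ≤ ε := min_le_left _ _
  set C : ℕ := 44 * k * (⌈1 / ε'⌉₊ * ⌈1 / ε'⌉₊) with hCdef
  set N : ℕ := C.choose k with hNdef
  have hceil1 : 1 ≤ ⌈1 / ε'⌉₊ := by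
    rw [Nat.one_le_ceil_iff]
    positivity
  have hkC : k ≤ C := by
    calc k ≤ 44 * k := by omega
    _ ≤ 44 * k * (⌈1 / ε'⌉₊ * ⌈1 / ε'⌉₊) := Nat.le_mul_of_pos_right _ (by positivity)
  have hC1 : 1 ≤ C := le_trans (by omega) hkC
  have hNpos : 1 ≤ N := Nat.choose_pos hkC
  refine ⟨max (⌈4 / ε'⌉₊ + 1) (9 * N * C + 9), fun r hr => ?_⟩
  have hr9 : 9 * N * C + 9 ≤ r := le_trans (le_max_right _ _) hr
  have hr4 : ⌈4 / ε'⌉₊ + 1 ≤ r := le_trans (le_max_left _ _) hr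
  have hr1 : 1 ≤ r := by omega
  -- real-number facts
  have hRpos : (0 : ℝ) < r := by exact_mod_cast (by omega : 0 < r)
  have hε'r4 : 4 ≤ ε' * r := by
    have h1 : (4 / ε' : ℝ) ≤ ⌈4 / ε'⌉₊ := Nat.le_ceil _
    have h2 : ((⌈4 / ε'⌉₊ : ℕ) : ℝ) + 1 ≤ r := by exact_mod_cast hr4
    have h3 : (4 / ε' : ℝ) ≤ r := by linarith
    calc (4 : ℝ) = (4 / ε') * ε' := by field_simp
    _ ≤ (r : ℝ) * ε' := mul_le_mul_of_nonneg_right h3 (le_of_lt hε'pos)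
    _ = ε' * r := by ring
  set m : ℕ := ⌊ε' * r⌋₊ with hmdef
  set n : ℕ := 2 * r + m with hndef
  have hm1 : (m : ℝ) ≤ ε' * r := Nat.floor_le (by positivity)
  have hm2 : ε' * r - 1 ≤ (m : ℝ) := by
    have := Nat.lt_floor_add_one (ε' * r)
    linarith
  have hm3 : ε' * r / 2 ≤ (m : ℝ) := by linarith
  have hmr : (m : ℝ) ≤ r := by
    calc (m : ℝ) ≤ ε' * r := hm1
    _ ≤ 1 * r := mul_le_mul_of_nonneg_right hε'le1 (le_of_lt hRpos)
    _ = r := one_mul _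
  have hCR : 44 * (k : ℝ) * (1 / ε') * (1 / ε') ≤ C := by
    have h1 : (1 / ε' : ℝ) ≤ ⌈1 / ε'⌉₊ := Nat.le_ceil _
    have h2 : (C : ℝ) = 44 * k * ((⌈1 / ε'⌉₊ : ℝ) * (⌈1 / ε'⌉₊ : ℝ)) := by
      rw [hCdef]; push_cast; ring
    rw [h2]
    have h3 : (1 / ε' : ℝ) * (1 / ε') ≤ (⌈1 / ε'⌉₊ : ℝ) * (⌈1 / ε'⌉₊ : ℝ) :=
      mul_le_mul h1 h1 (by positivity) (by positivity)
    calc 44 * (k : ℝ) * (1 / ε') * (1 / ε') = 44 * k * ((1 / ε') * (1 / ε')) := by ring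
    _ ≤ 44 * (k : ℝ) * ((⌈1 / ε'⌉₊ : ℝ) * (⌈1 / ε'⌉₊ : ℝ)) :=
      mul_le_mul_of_nonneg_left h3 (by positivity)
  have hNCr : 9 * (N : ℝ) * C + 9 ≤ r := by exact_mod_cast hr9
  -- the counting hypothesis
  have hu : n - (2 * r - 2) = m + 2 := by omega
  have hQ : (Nat.choose C k : ℝ) * (n * C) <
      (C : ℝ) * ((Nat.choose (n - (2 * r - 2)) 2 : ℕ) : ℝ)
        - ((k : ℝ) - 1) * (Nat.choose n 2 : ℝ) := by
    have hchooseu : ((Nat.choose (n - (2 * r - 2)) 2 : ℕ) : ℝ)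
        = ((m : ℝ) + 2) * ((m : ℝ) + 1) / 2 := by
      rw [hu, Nat.cast_choose_two]
      push_cast
      ring_nf
    have hchoose2 : ((n.choose 2 : ℕ) : ℝ) = (n : ℝ) * ((n : ℝ) - 1) / 2 :=
      Nat.cast_choose_two (K := ℝ) n
    have hnR : (n : ℝ) = 2 * (r : ℝ) + (m : ℝ) := by rw [hndef]; push_cast; ring
    rw [hchooseu, hchoose2, ← hNdef]
    have hKR : (2 : ℝ) ≤ (k : ℝ) := by exact_mod_cast hk
    have hN1 : (1 : ℝ) ≤ (N : ℝ) := by exact_mod_cast hNpos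
    have hC1R : (1 : ℝ) ≤ (C : ℝ) := by exact_mod_cast hC1
    have hn3R : (n : ℝ) ≤ 3 * r := by rw [hnR]; linarith
    have hR1 : (1 : ℝ) ≤ (r : ℝ) := by exact_mod_cast hr1
    -- step 1 : C * choose(u,2) ≥ 5.5 K R^2
    have hM2 : ε' * (r : ℝ) / 2 * (ε' * (r : ℝ) / 2) ≤ (m : ℝ) * (m : ℝ) :=
      mul_le_mul hm3 hm3 (by positivity) (by positivity)
    have hCM : 44 * (k : ℝ) * (1 / ε') * (1 / ε') * (ε' * (r : ℝ) / 2 * (ε' * (r : ℝ) / 2))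
        ≤ (C : ℝ) * ((m : ℝ) * (m : ℝ)) :=
      mul_le_mul hCR hM2 (by positivity) (by positivity)
    have hCMsimp : 44 * (k : ℝ) * (1 / ε') * (1 / ε') * (ε' * (r : ℝ) / 2 * (ε' * (r : ℝ) / 2))
        = 11 * (k : ℝ) * ((r : ℝ) * (r : ℝ)) := by
      field_simp
      ring
    have hstep1 : 11 * (k : ℝ) * ((r : ℝ) * (r : ℝ)) / 2
        ≤ (C : ℝ) * (((m : ℝ) + 2) * ((m : ℝ) + 1) / 2) := by
      have h1 : 11 * (k : ℝ) * ((r : ℝ) * (r : ℝ)) ≤ (C : ℝ) * ((m : ℝ) * (m : ℝ)) := by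
        rw [← hCMsimp]; exact hCM
      nlinarith [h1, (by positivity : (0:ℝ) ≤ (m:ℝ)), hC1R]
    -- step 2 : (k-1) term
    have hstep2 : ((k : ℝ) - 1) * ((n : ℝ) * ((n : ℝ) - 1) / 2)
        ≤ 9 * (k : ℝ) * ((r : ℝ) * (r : ℝ)) / 2 := by
      have hnn : (0 : ℝ) ≤ (n : ℝ) - 1 := by
        rw [hnR]; linarith [(by positivity : (0:ℝ) ≤ (m:ℝ))]
      have h1 : ((n : ℝ) - 1) ≤ 3 * r := by linarith
      have h2 : (n : ℝ) * ((n : ℝ) - 1) ≤ (3 * (r : ℝ)) * (3 * (r : ℝ)) :=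
        mul_le_mul hn3R h1 hnn (by positivity)
      nlinarith [h2, hKR]
    -- step 3 : N term
    have hstep3 : (N : ℝ) * ((n : ℝ) * (C : ℝ)) ≤ (r : ℝ) * (r : ℝ) / 3 := by
      have h1 : (N : ℝ) * (C : ℝ) ≤ ((r : ℝ) - 9) / 9 := by linarith
      have h2 : (N : ℝ) * ((n : ℝ) * (C : ℝ)) ≤ (3 * r) * (((r : ℝ) - 9) / 9) := by
        calc (N : ℝ) * ((n : ℝ) * (C : ℝ)) = (n : ℝ) * ((N : ℝ) * (C : ℝ)) := by ring
        _ ≤ (3 * r) * (((r : ℝ) - 9) / 9) := by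
            refine mul_le_mul hn3R h1 (by positivity) (by positivity)
      nlinarith [h2]
    -- combine : margin is K R^2 - R^2/3 > 0
    have hfinal : (r : ℝ) * (r : ℝ) / 3 < (k : ℝ) * ((r : ℝ) * (r : ℝ)) := by
      nlinarith [hKR, hRpos]
    nlinarith [hstep1, hstep2, hstep3, hfinal]
  obtain ⟨L, hLgood⟩ := exists_good_lists n r k C (by omega) hkC hQ
  set L' : Sym2 (Fin n) → Finset ℕ := fun e =>
    if h : e.IsDiag then ∅ else ((L ⟨e, h⟩).1.map ⟨Fin.val, Fin.val_injective⟩) with hL'def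
  have hmemS : n ∈ { n : ℕ | ∃ L : Sym2 (Fin n) → Finset ℕ,
      (∀ e : Sym2 (Fin n), ¬ e.IsDiag → (L e).card = k) ∧
      ∀ c : Sym2 (Fin n) → ℕ, (∀ e : Sym2 (Fin n), ¬ e.IsDiag → c e ∈ L e) →
        HasMonoCopy (matchingGraph r) c } := by
    refine ⟨L', fun e he => ?_, fun c hc => ?_⟩
    · rw [hL'def]
      simp only [dif_neg he, Finset.card_map]
      exact (L ⟨e, he⟩).2
    · refine forcing L hLgood c (fun e => ?_)
      have := hc e.1 e.2
      rw [hL'def] at this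
      simp only [dif_neg e.2, Finset.mem_map, Function.Embedding.coeFn_mk] at this
      obtain ⟨x, hx1, hx2⟩ := this
      exact ⟨x, hx1, hx2⟩
  have hub : listRamsey (matchingGraph r) k ≤ n := Nat.sInf_le hmemS
  have hlb : 2 * r ≤ listRamsey (matchingGraph r) k := by
    refine le_csInf ⟨n, hmemS⟩ ?_
    rintro b ⟨Lb, hLb1, hLb2⟩
    have hadm : ∀ e : Sym2 (Fin b), ¬ e.IsDiag →
        (fun e => if h : (Lb e).Nonempty then (Lb e).min' h else 0) e ∈ Lb e := by
      intro e he
      have hne : (Lb e).Nonempty := Finset.card_pos.1 (by rw [hLb1 e he]; omega)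
      simp only [dif_pos hne]
      exact Finset.min'_mem _ _
    obtain ⟨f, x, hfinj, -⟩ := hLb2 _ hadm
    have := Fintype.card_le_of_injective f hfinj
    simpa using this
  refine ⟨hlb, ?_⟩
  calc (listRamsey (matchingGraph r) k : ℝ) ≤ (n : ℝ) := by exact_mod_cast hub
  _ = 2 * (r : ℝ) + (m : ℝ) := by rw [hndef]; push_cast; ring
  _ ≤ 2 * (r : ℝ) + ε' * r := by linarith [hm1]
  _ ≤ (2 + ε) * r := by nlinarith [hε'leε, hRpos]
end

section
/- For every positive integer k, the k-colour list Ramsey number of the triangle satisfies R_ℓ(K_3, k) > e^{√k/4}. -/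
open Finset

private def RN : ℕ → ℕ
  | 0 => 2
  | (k+1) => (k+1) * RN k + 2

private lemma hasMonoCopy_of_triple {n : ℕ} (c : Sym2 (Fin n) → ℕ) {u v w : Fin n}
    (huv : u ≠ v) (huw : u ≠ w) (hvw : v ≠ w)
    (h1 : c s(u,v) = c s(u,w)) (h2 : c s(u,v) = c s(v,w)) :
    HasMonoCopy (⊤ : SimpleGraph (Fin 3)) c := by
  refine ⟨![u,v,w], c s(u,v), ?_, ?_⟩
  · intro a b hab
    fin_cases a <;> fin_cases b <;> simp_all
  · intro a b hadj
    have hab : a ≠ b := hadj.ne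
    fin_cases a <;> fin_cases b <;> simp_all [Sym2.eq_swap]

private lemma ramsey_tri (k : ℕ) : ∀ (V : Type) [Fintype V] [DecidableEq V], ∀ (c : Sym2 V → ℕ),
    RN k ≤ Fintype.card V → (∀ u v : V, u ≠ v → c s(u,v) < k) →
    ∃ u v w : V, u ≠ v ∧ u ≠ w ∧ v ≠ w ∧ c s(u,v) = c s(u,w) ∧ c s(u,v) = c s(v,w) := by
  induction k with
  | zero =>
    intro V _ _ c hcard hc
    have h2 : 1 < Fintype.card V := hcard
    obtain ⟨u, v, huv⟩ := Fintype.exists_pair_of_one_lt_card h2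
    exact absurd (hc u v huv) (Nat.not_lt_zero _)
  | succ k ih =>
    intro V _ _ c hcard hc
    have hRN : RN (k+1) = (k+1) * RN k + 2 := rfl
    have hpos : 0 < Fintype.card V := by omega
    obtain ⟨v0⟩ := Fintype.card_pos_iff.mp hpos
    have hscard : (Finset.univ.erase v0).card = Fintype.card V - 1 := by
      rw [Finset.card_erase_of_mem (Finset.mem_univ _), Finset.card_univ]
    have hmaps : ∀ u ∈ Finset.univ.erase v0, c s(v0, u) ∈ Finset.range (k+1) := by
      intro u hu
      have : v0 ≠ u := (Finset.ne_of_mem_erase hu).symm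
      exact Finset.mem_range.mpr (hc v0 u this)
    have hmul : (Finset.range (k+1)).card * RN k < (Finset.univ.erase v0).card := by
      rw [Finset.card_range, hscard]; omega
    obtain ⟨i, hi, hB⟩ := Finset.exists_lt_card_fiber_of_mul_lt_card_of_maps_to hmaps hmul
    set B := (Finset.univ.erase v0).filter (fun u => c s(v0, u) = i) with hBdef
    by_cases hcase : ∃ u ∈ B, ∃ w ∈ B, u ≠ w ∧ c s(u,w) = i
    · obtain ⟨u, hu, w, hw, huw, hcuw⟩ := hcase
      have hu' := Finset.mem_filter.mp hu
      have hw' := Finset.mem_filter.mp hw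
      have h1 : v0 ≠ u := (Finset.ne_of_mem_erase hu'.1).symm
      have h2 : v0 ≠ w := (Finset.ne_of_mem_erase hw'.1).symm
      exact ⟨v0, u, w, h1, h2, huw, by rw [hu'.2, hw'.2], by rw [hu'.2, hcuw]⟩
    · push_neg at hcase
      have hBcard : RN k ≤ Fintype.card {x // x ∈ B} := by
        rw [Fintype.card_coe]; omega
      have hik : i < k + 1 := Finset.mem_range.mp hi
      set d : ℕ → ℕ := fun j => if j < i then j else j - 1 with hd
      set c' : Sym2 {x // x ∈ B} → ℕ := fun e => d (c (e.map Subtype.val)) with hc'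
      have key : ∀ u v : {x // x ∈ B}, u ≠ v →
          c s(u.val, v.val) < k + 1 ∧ c s(u.val, v.val) ≠ i := by
        intro u v huv
        have hne : u.val ≠ v.val := fun h => huv (Subtype.ext h)
        exact ⟨hc _ _ hne, hcase u.val u.2 v.val v.2 hne⟩
      have hc'eq : ∀ u v : {x // x ∈ B}, c' s(u,v) = d (c s(u.val, v.val)) := by
        intro u v
        simp only [hc', Sym2.map_pair_eq]
      have hc'lt : ∀ u v : {x // x ∈ B}, u ≠ v → c' s(u,v) < k := by
        intro u v huv
        obtain ⟨h1, h2⟩ := key u v huv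
        rw [hc'eq]
        simp only [hd]
        split <;> omega
      obtain ⟨u, v, w, huv, huw, hvw, e1, e2⟩ := ih {x // x ∈ B} c' hBcard hc'lt
      rw [hc'eq, hc'eq] at e1 e2
      have dinj : ∀ a b : ℕ, a < k+1 → a ≠ i → b < k+1 → b ≠ i → d a = d b → a = b := by
        intro a b ha1 ha2 hb1 hb2 h
        simp only [hd] at h
        split_ifs at h <;> omega
      obtain ⟨huv1, huv2⟩ := key u v huv
      obtain ⟨huw1, huw2⟩ := key u w huw
      obtain ⟨hvw1, hvw2⟩ := key v w hvw
      refine ⟨u.val, v.val, w.val, fun h => huv (Subtype.ext h), fun h => huw (Subtype.ext h),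
        fun h => hvw (Subtype.ext h), ?_, ?_⟩
      · exact dinj _ _ huv1 huv2 huw1 huw2 e1
      · exact dinj _ _ huv1 huv2 hvw1 hvw2 e2

private lemma exists_tri_free (n t : ℕ) (hn : n ≤ 2^t) :
    ∃ g : Sym2 (Fin n) → ℕ, (∀ u v : Fin n, u ≠ v → g s(u,v) < t) ∧
      (∀ u v w : Fin n, u ≠ v → u ≠ w → v ≠ w →
        ¬(g s(u,v) = g s(u,w) ∧ g s(u,v) = g s(v,w))) := by
  set D : Fin n → Fin n → Finset ℕ :=
    fun u v => (Finset.range t).filter (fun i => (u.val ^^^ v.val).testBit i) with hD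
  have hDsymm : ∀ u v, D u v = D v u := by
    intro u v; simp only [hD, Nat.xor_comm]
  have hmemD : ∀ (u v : Fin n) (i : ℕ), i ∈ D u v ↔
      i < t ∧ (u.val).testBit i ≠ (v.val).testBit i := by
    intro u v i
    simp only [hD, Finset.mem_filter, Finset.mem_range, Nat.testBit_xor]
    constructor
    · rintro ⟨h1, h2⟩
      exact ⟨h1, by simpa using h2⟩
    · rintro ⟨h1, h2⟩
      exact ⟨h1, by simpa using h2⟩
  have hne : ∀ u v : Fin n, u ≠ v → (D u v).Nonempty := by
    intro u v huv
    have hval : u.val ≠ v.val := fun h => huv (Fin.ext h)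
    have hx : u.val ^^^ v.val ≠ 0 := by
      intro h
      exact hval (Nat.eq_of_xor_eq_zero h)
    have hxlt : u.val ^^^ v.val < 2^t :=
      Nat.xor_lt_two_pow (lt_of_lt_of_le u.isLt hn) (lt_of_lt_of_le v.isLt hn)
    have hex : ∃ i, (u.val ^^^ v.val).testBit i = true := by
      by_contra h
      push_neg at h
      exact hx (Nat.eq_of_testBit_eq fun i => by
        rw [Nat.zero_testBit]
        exact Bool.eq_false_iff.mpr (h i))
    obtain ⟨i, hi⟩ := hex
    have hit : i < t := by
      by_contra h
      push_neg at h
      have : u.val ^^^ v.val < 2^i := lt_of_lt_of_le hxlt (Nat.pow_le_pow_right (by norm_num) h)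
      rw [Nat.testBit_lt_two_pow this] at hi
      exact Bool.false_ne_true hi
    refine ⟨i, (hmemD u v i).mpr ⟨hit, ?_⟩⟩
    rw [Nat.testBit_xor] at hi
    simpa using hi
  have hsup : ∀ u v : Fin n, u ≠ v → (D u v).sup id ∈ D u v := by
    intro u v huv
    have H := hne u v huv
    rw [← Finset.sup'_eq_sup H id]
    obtain ⟨b, hb, heq⟩ := Finset.exists_mem_eq_sup' H id
    rw [heq]; exact hb
  refine ⟨Sym2.lift ⟨fun u v => (D u v).sup id,
      fun u v => show (D u v).sup id = (D v u).sup id by rw [hDsymm]⟩, ?_, ?_⟩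
  · intro u v huv
    simp only [Sym2.lift_mk]
    exact ((hmemD u v _).mp (hsup u v huv)).1
  · rintro u v w huv huw hvw ⟨h1, h2⟩
    simp only [Sym2.lift_mk] at h1 h2
    have m1 := hsup u v huv
    have m2 := hsup u w huw
    have m3 := hsup v w hvw
    rw [h1] at m1
    rw [← h2, h1] at m3
    rw [hmemD] at m1 m2 m3
    have b1 := m1.2
    have b2 := m2.2
    have b3 := m3.2
    revert b1 b2 b3
    cases (u.val).testBit ((D u w).sup id) <;> cases (v.val).testBit ((D u w).sup id) <;>
      cases (w.val).testBit ((D u w).sup id) <;> simp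

private lemma part_b (k : ℕ) (hk : 0 < k) (n : ℕ)
    (L : Sym2 (Fin n) → Finset ℕ)
    (hL : ∀ e : Sym2 (Fin n), ¬ e.IsDiag → (L e).card = k)
    (hR : ∀ c : Sym2 (Fin n) → ℕ, (∀ e : Sym2 (Fin n), ¬ e.IsDiag → c e ∈ L e) →
      HasMonoCopy (⊤ : SimpleGraph (Fin 3)) c) :
    Real.exp (Real.sqrt k / 4) < (n : ℝ) := by
  classical
  -- step 1 : n ≥ 3
  have h3 : 3 ≤ n := by
    set c₀ : Sym2 (Fin n) → ℕ := fun e => if h : (L e).Nonempty then h.choose else 0 with hc₀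
    have hc₀mem : ∀ e : Sym2 (Fin n), ¬ e.IsDiag → c₀ e ∈ L e := by
      intro e he
      have hne : (L e).Nonempty := Finset.card_pos.mp (by rw [hL e he]; exact hk)
      simp only [hc₀, dif_pos hne]
      exact hne.choose_spec
    obtain ⟨f, x, hf, -⟩ := hR c₀ hc₀mem
    simpa using Fintype.card_le_of_injective f hf
  by_contra hlt
  push_neg at hlt
  set s : ℝ := Real.sqrt k with hsdef
  have hs0 : 0 ≤ s := Real.sqrt_nonneg _
  have hs2 : s ^ 2 = k := Real.sq_sqrt (by positivity)
  have hn3 : (3 : ℝ) ≤ (n : ℝ) := by exact_mod_cast h3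
  have hexp3 : (3 : ℝ) ≤ Real.exp (s / 4) := le_trans hn3 hlt
  have hlog3 : (1 : ℝ) < Real.log 3 := by
    rw [show (1:ℝ) = Real.log (Real.exp 1) by rw [Real.log_exp]]
    apply Real.log_lt_log (Real.exp_pos 1)
    have := Real.exp_one_lt_d9
    linarith
  have hs4 : 4 < s := by
    have : Real.log 3 ≤ s / 4 := by
      rw [← Real.log_exp (s/4)]
      exact Real.log_le_log (by norm_num) hexp3
    linarith
  set t : ℕ := ⌈s⌉₊ with htdef
  have hts : s ≤ (t : ℝ) := Nat.le_ceil s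
  have hts1 : (t : ℝ) < s + 1 := Nat.ceil_lt_add_one hs0
  have ht4 : (4:ℝ) < (t : ℝ) := lt_of_lt_of_le hs4 hts
  have ht4' : 4 < t := by exact_mod_cast ht4
  have ht0 : 0 < t := by omega
  have ht0R : (0:ℝ) < (t:ℝ) := by positivity
  -- step: n ≤ 2 ^ t
  have hn2t : n ≤ 2 ^ t := by
    have h1 : (n : ℝ) ≤ Real.exp ((t : ℝ) * Real.log 2) := by
      apply le_trans hlt
      apply Real.exp_le_exp.mpr
      have hlog2 : (1:ℝ)/4 ≤ Real.log 2 := by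
        have := Real.log_two_gt_d9; linarith
      nlinarith
    have h2 : Real.exp ((t : ℝ) * Real.log 2) = (2 : ℝ) ^ t := by
      rw [Real.exp_nat_mul, Real.exp_log (by norm_num)]
    rw [h2] at h1
    exact_mod_cast h1
  -- step: key counting inequality
  have hkR : (0:ℝ) < (k:ℝ) := by exact_mod_cast hk
  have hkey : n ^ 2 * (t - 1) ^ k < t ^ k := by
    have htR : ((t - 1 : ℕ) : ℝ) = (t : ℝ) - 1 := by
      rw [Nat.cast_sub (by omega)]; norm_num
    have hstep : ((t : ℝ) - 1) ≤ Real.exp (-(1 / (t:ℝ))) * t := by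
      have h := Real.add_one_le_exp (-(1 / (t:ℝ)))
      calc (t : ℝ) - 1 = (-(1/(t:ℝ)) + 1) * t := by field_simp; ring
        _ ≤ Real.exp (-(1 / (t:ℝ))) * t := mul_le_mul_of_nonneg_right h (le_of_lt ht0R)
    have hpow : ((t : ℝ) - 1) ^ k ≤ Real.exp (-((k:ℝ) / (t:ℝ))) * (t:ℝ) ^ k := by
      calc ((t : ℝ) - 1) ^ k ≤ (Real.exp (-(1 / (t:ℝ))) * t) ^ k := by
            apply pow_le_pow_left₀ (by linarith) hstep
        _ = Real.exp (-((k:ℝ) / (t:ℝ))) * (t:ℝ) ^ k := by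
            rw [mul_pow, ← Real.exp_nat_mul]
            ring_nf
    have hn2 : (n : ℝ) ^ 2 ≤ Real.exp (s / 2) := by
      have h := pow_le_pow_left₀ (by positivity) hlt 2
      rw [← Real.exp_nat_mul] at h
      convert h using 2
      · rfl
      · push_cast; ring
    have hexpneg : Real.exp (s / 2) * Real.exp (-((k:ℝ) / (t:ℝ))) < 1 := by
      rw [← Real.exp_add]
      have h0 : Real.exp (s / 2 + -((k:ℝ) / (t:ℝ))) < Real.exp 0 := by
        apply Real.exp_lt_exp.mpr
        have hst : s * (t:ℝ) < 2 * (k:ℝ) := by nlinarith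
        have : s / 2 < (k:ℝ) / (t:ℝ) := by
          rw [div_lt_div_iff₀ (by norm_num) ht0R]
          linarith
        linarith
      rw [Real.exp_zero] at h0
      exact h0
    have hfinal : ((n:ℝ)) ^ 2 * ((t:ℝ) - 1) ^ k < (t:ℝ) ^ k := by
      calc ((n:ℝ)) ^ 2 * ((t:ℝ) - 1) ^ k
          ≤ Real.exp (s/2) * (Real.exp (-((k:ℝ)/(t:ℝ))) * (t:ℝ)^k) := by
            apply mul_le_mul hn2 hpow (pow_nonneg (by linarith) k) (by positivity)
        _ = (Real.exp (s/2) * Real.exp (-((k:ℝ)/(t:ℝ)))) * (t:ℝ)^k := by ring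
        _ < 1 * (t:ℝ)^k := mul_lt_mul_of_pos_right hexpneg (by positivity)
        _ = (t:ℝ)^k := by ring
    rw [← htR] at hfinal
    exact_mod_cast hfinal
  -- combinatorial part
  obtain ⟨g, hg1, hg2⟩ := exists_tri_free n t hn2t
  set S₀ : Finset ℕ := Finset.univ.biUnion L with hS₀
  have hsub : ∀ e : Sym2 (Fin n), L e ⊆ S₀ := by
    intro e a ha; exact Finset.mem_biUnion.mpr ⟨e, Finset.mem_univ _, ha⟩
  set E : Finset (Sym2 (Fin n)) := Finset.univ.filter (fun e => ¬ e.IsDiag) with hE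
  have hgE : ∀ e ∈ E, g e < t := by
    intro e
    induction e using Sym2.ind with
    | _ u v =>
      intro he
      have hd : ¬ (s(u,v) : Sym2 (Fin n)).IsDiag := (Finset.mem_filter.mp he).2
      exact hg1 u v (fun h => hd (Sym2.mk_isDiag_iff.mpr h))
  set All : Finset (∀ a ∈ S₀, ℕ) := S₀.pi (fun _ => Finset.range t) with hAll
  have hAllcard : All.card = t ^ S₀.card := by
    rw [hAll, Finset.card_pi]
    simp
  set Bad : Sym2 (Fin n) → Finset (∀ a ∈ S₀, ℕ) :=
    fun e => S₀.pi (fun a => if a ∈ L e then (Finset.range t).erase (g e) else Finset.range t)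
    with hBad
  have hBadcard : ∀ e ∈ E, (Bad e).card = (t-1)^k * t^(S₀.card - k) := by
    intro e he
    have hgt : g e ∈ Finset.range t := Finset.mem_range.mpr (hgE e he)
    have hLk : (L e).card = k := hL e (Finset.mem_filter.mp he).2
    rw [hBad]
    simp only
    rw [Finset.card_pi]
    have hcards : ∀ a ∈ S₀,
        (if a ∈ L e then (Finset.range t).erase (g e) else Finset.range t).card
          = if a ∈ L e then t - 1 else t := by
      intro a _
      split
      · rw [Finset.card_erase_of_mem hgt, Finset.card_range]
      · rw [Finset.card_range]
    rw [Finset.prod_congr rfl hcards, Finset.prod_ite, Finset.prod_const, Finset.prod_const]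
    have hfilter : S₀.filter (fun a => a ∈ L e) = L e := by
      rw [Finset.filter_mem_eq_inter, Finset.inter_eq_right.mpr (hsub e)]
    have hnot : (S₀.filter (fun a => ¬ a ∈ L e)).card = S₀.card - k := by
      rw [Finset.filter_not, Finset.card_sdiff_of_subset (Finset.filter_subset _ _), hfilter, hLk]
    rw [hfilter, hLk, hnot]
  have hkS : k ≤ S₀.card := by
    have hd : ¬ (s((⟨0, by omega⟩ : Fin n), (⟨1, by omega⟩ : Fin n))).IsDiag := by
      rw [Sym2.mk_isDiag_iff]
      intro h
      have h' : (0 : ℕ) = 1 := congrArg Fin.val h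
      exact absurd h' (by norm_num)
    calc k = (L _).card := (hL _ hd).symm
      _ ≤ S₀.card := Finset.card_le_card (hsub _)
  have hEcard : E.card ≤ n ^ 2 := by
    have h1 : E.card ≤ Fintype.card (Sym2 (Fin n)) := by
      rw [← Finset.card_univ]
      exact Finset.card_le_card (Finset.filter_subset _ _)
    have h2 : Fintype.card (Sym2 (Fin n)) = (n+1) * n / 2 := by
      rw [Sym2.card, Fintype.card_fin, Nat.choose_two_right]
      simp
    have h4 : (n+1) * n / 2 ≤ n ^ 2 := by
      apply Nat.div_le_of_le_mul
      nlinarith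
    omega
  have hgood : ∃ σ ∈ All, ∀ e ∈ E, ∃ a, ∃ h : a ∈ S₀, a ∈ L e ∧ σ a h = g e := by
    by_contra hcon
    push_neg at hcon
    have hcover : All ⊆ E.biUnion Bad := by
      intro σ hσ
      obtain ⟨e, he, hfail⟩ := hcon σ hσ
      refine Finset.mem_biUnion.mpr ⟨e, he, ?_⟩
      rw [hBad]
      simp only
      rw [Finset.mem_pi]
      intro a ha
      have hmem : σ a ha ∈ Finset.range t := by
        rw [hAll, Finset.mem_pi] at hσ
        exact hσ a ha
      split
      · next haL => exact Finset.mem_erase.mpr ⟨hfail a ha haL, hmem⟩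
      · exact hmem
    have hle := Finset.card_le_card hcover
    have hbu := Finset.card_biUnion_le (s := E) (t := Bad)
    have hsum : ∑ e ∈ E, (Bad e).card = E.card * ((t-1)^k * t^(S₀.card-k)) := by
      rw [Finset.sum_congr rfl hBadcard, Finset.sum_const, smul_eq_mul]
    have hlt2 : E.card * ((t-1)^k * t^(S₀.card-k)) < t ^ S₀.card := by
      calc E.card * ((t-1)^k * t^(S₀.card-k))
          ≤ n^2 * ((t-1)^k * t^(S₀.card-k)) := Nat.mul_le_mul_right _ hEcard
        _ = (n^2 * (t-1)^k) * t^(S₀.card-k) := by ring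
        _ < t^k * t^(S₀.card-k) := mul_lt_mul_of_pos_right hkey (Nat.pow_pos ht0)
        _ = t ^ S₀.card := by rw [← pow_add]; congr 1; omega
    rw [hAllcard] at hle
    omega
  obtain ⟨σ, hσAll, hσ⟩ := hgood
  set σ' : ℕ → ℕ := fun a => if h : a ∈ S₀ then σ a h else 0 with hσ'def
  have hgood' : ∀ e ∈ E, ∃ a ∈ L e, σ' a = g e := by
    intro e he
    obtain ⟨a, h, haL, hval⟩ := hσ e he
    refine ⟨a, haL, ?_⟩
    simp only [hσ'def, dif_pos h]
    exact hval
  set c : Sym2 (Fin n) → ℕ := fun e => if h : ∃ a ∈ L e, σ' a = g e then h.choose else 0 with hc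
  have hcmem : ∀ e : Sym2 (Fin n), ¬ e.IsDiag → c e ∈ L e ∧ σ' (c e) = g e := by
    intro e he
    have heE : e ∈ E := Finset.mem_filter.mpr ⟨Finset.mem_univ _, he⟩
    have hex := hgood' e heE
    simp only [hc, dif_pos hex]
    exact hex.choose_spec
  obtain ⟨f, x, hf, hmono⟩ := hR c (fun e he => (hcmem e he).1)
  have h01 : f 0 ≠ f 1 := fun h => absurd (hf h) (by decide)
  have h02 : f 0 ≠ f 2 := fun h => absurd (hf h) (by decide)
  have h12 : f 1 ≠ f 2 := fun h => absurd (hf h) (by decide)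
  have e1 := hmono 0 1 (by simp [SimpleGraph.top_adj])
  have e2 := hmono 0 2 (by simp [SimpleGraph.top_adj])
  have e3 := hmono 1 2 (by simp [SimpleGraph.top_adj])
  have hd1 : ¬ (s(f 0, f 1)).IsDiag := fun h => h01 (Sym2.mk_isDiag_iff.mp h)
  have hd2 : ¬ (s(f 0, f 2)).IsDiag := fun h => h02 (Sym2.mk_isDiag_iff.mp h)
  have hd3 : ¬ (s(f 1, f 2)).IsDiag := fun h => h12 (Sym2.mk_isDiag_iff.mp h)
  have g1 : σ' x = g s(f 0, f 1) := by rw [← e1]; exact (hcmem _ hd1).2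
  have g2 : σ' x = g s(f 0, f 2) := by rw [← e2]; exact (hcmem _ hd2).2
  have g3 : σ' x = g s(f 1, f 2) := by rw [← e3]; exact (hcmem _ hd3).2
  exact hg2 (f 0) (f 1) (f 2) h01 h02 h12 ⟨g1.symm.trans g2, g1.symm.trans g3⟩

theorem list_ramsey_triangle_lower (k : ℕ) (hk : 0 < k) :
    Real.exp (Real.sqrt k / 4) < (listRamsey (⊤ : SimpleGraph (Fin 3)) k : ℝ) := by
  classical
  have hne : { n : ℕ | ∃ L : Sym2 (Fin n) → Finset ℕ,
      (∀ e : Sym2 (Fin n), ¬ e.IsDiag → (L e).card = k) ∧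
      ∀ c : Sym2 (Fin n) → ℕ, (∀ e : Sym2 (Fin n), ¬ e.IsDiag → c e ∈ L e) →
        HasMonoCopy (⊤ : SimpleGraph (Fin 3)) c }.Nonempty := by
    refine ⟨RN k, fun _ => Finset.range k, fun e _ => Finset.card_range k, ?_⟩
    intro c hc
    obtain ⟨u, v, w, huv, huw, hvw, h1, h2⟩ :=
      ramsey_tri k (Fin (RN k)) c (by simp)
        (fun u v huv => Finset.mem_range.mp (hc _ (fun h => huv (Sym2.mk_isDiag_iff.mp h))))
    exact hasMonoCopy_of_triple c huv huw hvw h1 h2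
  obtain ⟨L, hL, hR⟩ := Nat.sInf_mem hne
  exact part_b k hk _ L hL hR
end

section
/- Let H be an ℓ-partite ℓ-uniform hypergraph (ℓ ≥ 2) whose parts each have size at most r. Then there is a constant c = c(r,ℓ) > 0 such that for all sufficiently large integers k, R(H, ⌊c·k/log k⌋) ≤ R_ℓ(H, k) ≤ R(H, k). -/
/-- A hypergraph on vertex type `V`, given by its (finite) set of edges,
each edge being a finite set of vertices. -/
structure FinsetHypergraph (V : Type*) where
  edges : Finset (Finset V)

namespace FinsetHypergraph

variable {V : Type*} [DecidableEq V]

/-- `H` is `l`-uniform: every edge has exactly `l` vertices. -/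
def IsUniform (H : FinsetHypergraph V) (l : ℕ) : Prop :=
  ∀ e ∈ H.edges, e.card = l

/-- A colouring `c` of the edges of the complete `l`-uniform hypergraph on `Fin n`
(viewed as a colouring of all finite subsets of `Fin n`) contains a monochromatic
copy of the hypergraph `H`. -/
def HasMonoCopyIn {β : Type*} (H : FinsetHypergraph V) (n : ℕ) (c : Finset (Fin n) → β) : Prop :=
  ∃ (f : V → Fin n) (x : β), Function.Injective f ∧
    ∀ e ∈ H.edges, c (e.image f) = x

/-- The `k`-colour list Ramsey number of an `l`-uniform hypergraph `H`: the least `n`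
for which one can assign a list of `k` colours to each `l`-subset of `Fin n` so that
every colouring of the `l`-subsets from these lists contains a monochromatic copy of `H`. -/
noncomputable def listRamsey (H : FinsetHypergraph V) (l k : ℕ) : ℕ :=
  sInf { n : ℕ | ∃ L : Finset (Fin n) → Finset ℕ,
    (∀ e : Finset (Fin n), e.card = l → (L e).card = k) ∧
    ∀ c : Finset (Fin n) → ℕ, (∀ e : Finset (Fin n), e.card = l → c e ∈ L e) →
      H.HasMonoCopyIn n c }

/-- The ordinary `k`-colour Ramsey number of a hypergraph `H`: the least `n` such that
every `k`-colouring of the edges of the complete hypergraph on `Fin n` contains a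
monochromatic copy of `H`. -/
noncomputable def ramsey (H : FinsetHypergraph V) (k : ℕ) : ℕ :=
  sInf { n : ℕ | ∀ c : Finset (Fin n) → Fin k, H.HasMonoCopyIn n c }

end FinsetHypergraph

/-- The complete `l`-uniform hypergraph on `r` vertices. -/
def completeHG (r l : ℕ) : FinsetHypergraph (Fin r) :=
  ⟨Finset.powersetCard l Finset.univ⟩

/-- A finite set `G` of `l`-subsets of `Fin n` (an `l`-graph on `n` vertices)
contains a copy of the hypergraph `H`. -/
def IsCopyIn {V : Type*} [DecidableEq V] (H : FinsetHypergraph V) {n : ℕ}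
    (G : Finset (Finset (Fin n))) : Prop :=
  ∃ f : V → Fin n, Function.Injective f ∧ ∀ e ∈ H.edges, e.image f ∈ G


open Finset in
lemma avg_real {α : Type*} (s : Finset α) (g : α → ℕ) (T : ℝ)
    (hs : s.Nonempty) (hT : T ≤ ∑ a ∈ s, (g a : ℝ)) :
    ∃ a ∈ s, T / s.card ≤ (g a : ℝ) := by
  by_contra h
  push_neg at h
  have hlt : ∑ a ∈ s, (g a : ℝ) < ∑ _a ∈ s, T / s.card :=
    Finset.sum_lt_sum_of_nonempty hs h
  rw [Finset.sum_const, nsmul_eq_mul] at hlt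
  have hcard : (0:ℝ) < s.card := by exact_mod_cast hs.card_pos
  rw [mul_div_cancel₀ _ (ne_of_gt hcard)] at hlt
  linarith

def Req (r : ℕ) : ℕ → ℝ → ℕ → Prop
  | 0, β, _ => 0 < β
  | (l+1), β, n => (4*r : ℝ) ≤ β * n ∧ Req r l ((β/4)^(r+1)) n

lemma box (r : ℕ) (hr : 0 < r) :
    ∀ (l n : ℕ) (β : ℝ) (S : Finset (Fin l → Fin n)),
    Req r l β n → β * (n:ℝ)^l ≤ S.card →
    ∃ A : Fin l → Finset (Fin n), (∀ i, (A i).card = r) ∧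
      ∀ p : Fin l → Fin n, (∀ i, p i ∈ A i) → p ∈ S := by
  intro l
  induction l with
  | zero =>
    intro n β S hreq hS
    simp only [pow_zero, mul_one] at hS
    have hβ : 0 < β := hreq
    have hSne : S.Nonempty := Finset.card_pos.mp (by exact_mod_cast lt_of_lt_of_le hβ hS)
    obtain ⟨q, hq⟩ := hSne
    exact ⟨Fin.elim0, fun i => i.elim0, fun p _ => by
      have : p = q := funext fun i => i.elim0
      rwa [this]⟩
  | succ l ih =>
    intro n β S hreq hS
    obtain ⟨h4r, hreq'⟩ := hreq
    have hrR : (1:ℝ) ≤ r := by exact_mod_cast hr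
    have hβn : (0:ℝ) < β * n := lt_of_lt_of_le (by linarith) h4r
    have hn0 : (0:ℝ) < n := by
      rcases Nat.eq_zero_or_pos n with h | h
      · rw [h] at hβn; simp at hβn
      · exact_mod_cast h
    have hβ : 0 < β := by by_contra h; push_neg at h; nlinarith
    have hcardS : (S.card : ℝ) ≤ (n:ℝ)^(l+1) := by
      have h := Finset.card_le_univ S
      simp only [Finset.card_univ, Fintype.card_fun, Fintype.card_fin] at h
      exact_mod_cast h
    have hβ1 : β ≤ 1 := by
      have hpow : (0:ℝ) < (n:ℝ)^(l+1) := by positivity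
      nlinarith
    -- degree sets
    set D : (Fin l → Fin n) → Finset (Fin n) :=
      fun y => Finset.univ.filter (fun x => (Fin.cons x y : Fin (l+1) → Fin n) ∈ S) with hD
    have hsum : ∑ y : Fin l → Fin n, (D y).card = S.card := by
      rw [Finset.card_eq_sum_card_fiberwise
        (f := fun p => Fin.tail p) (t := Finset.univ) (fun x _ => Finset.mem_univ _)]
      refine Finset.sum_congr rfl fun y _ => ?_
      refine Finset.card_bij' (fun x _ => (Fin.cons x y : Fin (l+1) → Fin n)) (fun p _ => p 0) ?_ ?_ ?_ ?_
      · intro x hx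
        simp only [hD, Finset.mem_filter, Finset.mem_univ, true_and] at hx
        simp [Finset.mem_filter, hx, Fin.tail_cons]
      · intro p hp
        simp only [Finset.mem_filter] at hp
        simp only [hD, Finset.mem_filter, Finset.mem_univ, true_and]
        obtain ⟨h1, h2⟩ := hp
        subst h2
        rw [Fin.cons_self_tail]
        exact h1
      · intro x _; simp
      · intro p hp
        simp only [Finset.mem_filter] at hp
        obtain ⟨h1, h2⟩ := hp
        subst h2
        exact Fin.cons_self_tail p
    set B : ℕ := ⌊β * n / 2⌋₊ with hBdef
    have hB2r : 2*r ≤ B := by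
      apply Nat.le_floor
      push_cast
      linarith
    have hBle : (B:ℝ) ≤ β * n/2 := Nat.floor_le (by positivity)
    have hBgt : β * n/2 - 1 < B := Nat.sub_one_lt_floor _
    have hBn : r ≤ B := le_trans (by omega) hB2r
    have hBlen : B ≤ n := by
      have : (B:ℝ) ≤ n := by nlinarith
      exact_mod_cast this
    have hrn : r ≤ n := le_trans hBn hBlen
    set bigs := Finset.univ.filter (fun y : Fin l → Fin n => B ≤ (D y).card) with hbigs
    have hDn : ∀ y, ((D y).card : ℝ) ≤ n := by
      intro y
      have := Finset.card_le_univ (D y)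
      simp only [Finset.card_univ, Fintype.card_fin] at this
      exact_mod_cast this
    have ht : (β/2) * (n:ℝ)^l ≤ bigs.card := by
      have hsplit := Finset.sum_filter_add_sum_filter_not Finset.univ
        (fun y : Fin l → Fin n => B ≤ (D y).card) (fun y => ((D y).card : ℝ))
      have hb1 : ∑ y ∈ bigs, ((D y).card : ℝ) ≤ bigs.card * n := by
        rw [← nsmul_eq_mul]
        exact Finset.sum_le_card_nsmul _ _ _ (fun y _ => hDn y)
      have hb2 : ∑ y ∈ Finset.univ.filter (fun y : Fin l → Fin n => ¬ B ≤ (D y).card),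
          ((D y).card : ℝ) ≤ (n:ℝ)^l * (β*n/2) := by
        have hsmall : ∀ y ∈ Finset.univ.filter (fun y : Fin l → Fin n => ¬ B ≤ (D y).card),
            ((D y).card : ℝ) ≤ β*n/2 := by
          intro y hy
          simp only [Finset.mem_filter, not_le] at hy
          have : ((D y).card : ℝ) < B := by exact_mod_cast hy.2
          linarith
        have hcard : ((Finset.univ.filter (fun y : Fin l → Fin n => ¬ B ≤ (D y).card)).card : ℝ)
            ≤ (n:ℝ)^l := by
          have := Finset.card_le_univ (Finset.univ.filter (fun y : Fin l → Fin n => ¬ B ≤ (D y).card))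
          simp only [Finset.card_univ, Fintype.card_fun, Fintype.card_fin] at this
          exact_mod_cast this
        calc ∑ y ∈ Finset.univ.filter (fun y : Fin l → Fin n => ¬ B ≤ (D y).card), ((D y).card : ℝ)
            ≤ ∑ _y ∈ Finset.univ.filter (fun y : Fin l → Fin n => ¬ B ≤ (D y).card), (β*n/2) :=
              Finset.sum_le_sum hsmall
          _ = (Finset.univ.filter (fun y : Fin l → Fin n => ¬ B ≤ (D y).card)).card * (β*n/2) := by
              rw [Finset.sum_const, nsmul_eq_mul]
          _ ≤ (n:ℝ)^l * (β*n/2) := by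
              apply mul_le_mul_of_nonneg_right hcard (by positivity)
      have htot : β * (n:ℝ)^(l+1) ≤ ∑ y : Fin l → Fin n, ((D y).card : ℝ) := by
        rw [show ∑ y : Fin l → Fin n, ((D y).card : ℝ) = ((∑ y : Fin l → Fin n, (D y).card : ℕ) : ℝ)
          by push_cast; ring]
        rw [hsum]
        exact hS
      have key : β * (n:ℝ)^(l+1) ≤ bigs.card * n + (n:ℝ)^l * (β*n/2) := by
        rw [← hsplit] at htot
        calc β * (n:ℝ)^(l+1) ≤ _ := htot
          _ ≤ _ := add_le_add hb1 hb2
      have hexp : (n:ℝ)^(l+1) = (n:ℝ)^l * n := by ring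
      rw [hexp] at key
      have hnl : (0:ℝ) < (n:ℝ)^l := by positivity
      nlinarith
    -- double counting pairs (R, y)
    have hpair : ∀ y, ((Finset.powersetCard r (Finset.univ : Finset (Fin n))).filter
        (fun R => R ⊆ D y)).card = Nat.choose (D y).card r := by
      intro y
      rw [← Finset.card_powersetCard]
      congr 1
      ext R
      simp only [Finset.mem_filter, Finset.mem_powersetCard]
      constructor
      · rintro ⟨⟨_, hcard⟩, hsub⟩; exact ⟨hsub, hcard⟩
      · rintro ⟨hsub, hcard⟩; exact ⟨⟨Finset.subset_univ R, hcard⟩, hsub⟩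
    have hdouble : ∑ R ∈ Finset.powersetCard r (Finset.univ : Finset (Fin n)),
        (bigs.filter (fun y => R ⊆ D y)).card = ∑ y ∈ bigs, Nat.choose (D y).card r := by
      have : ∀ R, (bigs.filter (fun y => R ⊆ D y)).card
          = ∑ y ∈ bigs, if R ⊆ D y then 1 else 0 := fun R => Finset.card_filter _ _
      simp_rw [this]
      rw [Finset.sum_comm]
      refine Finset.sum_congr rfl fun y _ => ?_
      rw [← Finset.card_filter, hpair]
    have hlowsum : (bigs.card : ℝ) * Nat.choose B r
        ≤ ∑ R ∈ Finset.powersetCard r (Finset.univ : Finset (Fin n)),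
          ((bigs.filter (fun y => R ⊆ D y)).card : ℝ) := by
      rw [show ∑ R ∈ Finset.powersetCard r (Finset.univ : Finset (Fin n)),
          ((bigs.filter (fun y => R ⊆ D y)).card : ℝ)
          = ((∑ R ∈ Finset.powersetCard r (Finset.univ : Finset (Fin n)),
            (bigs.filter (fun y => R ⊆ D y)).card : ℕ) : ℝ) by push_cast; ring]
      rw [hdouble]
      have : ∀ y ∈ bigs, Nat.choose B r ≤ Nat.choose (D y).card r := by
        intro y hy
        simp only [hbigs, Finset.mem_filter] at hy
        exact Nat.choose_le_choose r hy.2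
      calc (bigs.card : ℝ) * Nat.choose B r
          = ((bigs.card * Nat.choose B r : ℕ) : ℝ) := by push_cast; ring
        _ ≤ ((∑ y ∈ bigs, Nat.choose (D y).card r : ℕ) : ℝ) := by
            have := Finset.card_nsmul_le_sum bigs _ _ this
            rw [smul_eq_mul] at this
            exact_mod_cast this
        _ = _ := by rfl
    have hPne : (Finset.powersetCard r (Finset.univ : Finset (Fin n))).Nonempty := by
      rw [Finset.powersetCard_nonempty]
      simpa using hrn
    have hPcard : (Finset.powersetCard r (Finset.univ : Finset (Fin n))).card
        = Nat.choose n r := by simp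
    obtain ⟨R, hRmem, hRavg⟩ := avg_real _ _ ((bigs.card : ℝ) * Nat.choose B r) hPne hlowsum
    rw [hPcard] at hRavg
    -- binomial ratio bound
    have hchooseBpos : (β/4)^r * (Nat.choose n r : ℝ) ≤ (Nat.choose B r : ℝ) := by
      have hdescB : ((B+1-r:ℕ):ℝ)^r ≤ (Nat.descFactorial B r : ℝ) := by
        exact_mod_cast Nat.pow_sub_le_descFactorial B r
      have hdescn : (Nat.descFactorial n r : ℝ) ≤ (n:ℝ)^r := by
        exact_mod_cast Nat.descFactorial_le_pow n r
      have hcast : ((B+1-r:ℕ):ℝ) = (B:ℝ)+1-r := by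
        have : r ≤ B + 1 := le_trans hBn (Nat.le_succ B)
        push_cast [Nat.cast_sub this]
        ring
      have hmid : (β*n/4) ≤ (B:ℝ)+1-r := by linarith
      have h1 : (β*n/4)^r ≤ ((B:ℝ)+1-r)^r :=
        pow_le_pow_left₀ (by positivity) hmid r
      have hfac : (0:ℝ) < (Nat.factorial r : ℝ) := by exact_mod_cast Nat.factorial_pos r
      have hdB : (Nat.descFactorial B r : ℝ) = (Nat.factorial r : ℝ) * Nat.choose B r := by
        exact_mod_cast Nat.descFactorial_eq_factorial_mul_choose B r
      have hdn : (Nat.descFactorial n r : ℝ) = (Nat.factorial r : ℝ) * Nat.choose n r := by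
        exact_mod_cast Nat.descFactorial_eq_factorial_mul_choose n r
      have key : (β/4)^r * (Nat.descFactorial n r : ℝ) ≤ (Nat.descFactorial B r : ℝ) := by
        calc (β/4)^r * (Nat.descFactorial n r : ℝ)
            ≤ (β/4)^r * (n:ℝ)^r := by
              apply mul_le_mul_of_nonneg_left hdescn (by positivity)
          _ = (β*n/4)^r := by rw [← mul_pow]; ring_nf
          _ ≤ ((B:ℝ)+1-r)^r := h1
          _ ≤ _ := by rw [← hcast]; exact hdescB
      rw [hdB, hdn] at key
      have := (mul_le_mul_iff_right₀ hfac).mp (by linarith [key] : (Nat.factorial r : ℝ) * ((β/4)^r * Nat.choose n r) ≤ (Nat.factorial r : ℝ) * Nat.choose B r)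
      exact this
    set S' := bigs.filter (fun y => R ⊆ D y) with hS'def
    have hchoosen_pos : (0:ℝ) < Nat.choose n r := by
      exact_mod_cast Nat.choose_pos hrn
    have hS' : (β/4)^(r+1) * (n:ℝ)^l ≤ (S'.card : ℝ) := by
      have h1 : ((β/2) * (n:ℝ)^l) * ((β/4)^r * Nat.choose n r) ≤ (bigs.card : ℝ) * Nat.choose B r := by
        apply mul_le_mul ht hchooseBpos (by positivity) (by positivity)
      have h2 : ((β/2) * (n:ℝ)^l) * ((β/4)^r * Nat.choose n r) / Nat.choose n r
          ≤ ((bigs.card : ℝ) * Nat.choose B r) / Nat.choose n r :=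
        by gcongr
      have h3 : ((β/2) * (n:ℝ)^l) * ((β/4)^r * Nat.choose n r) / Nat.choose n r
          = (β/2) * (β/4)^r * (n:ℝ)^l := by
        field_simp
      have h4 : (β/4)^(r+1) * (n:ℝ)^l ≤ (β/2) * (β/4)^r * (n:ℝ)^l := by
        have : (β/4)^(r+1) = (β/4) * (β/4)^r := by ring
        rw [this]
        have hq : (β/4) ≤ (β/2) := by linarith
        have : (β/4) * (β/4)^r ≤ (β/2) * (β/4)^r :=
          mul_le_mul_of_nonneg_right hq (by positivity)
        apply mul_le_mul_of_nonneg_right this (by positivity)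
      calc (β/4)^(r+1) * (n:ℝ)^l ≤ (β/2) * (β/4)^r * (n:ℝ)^l := h4
        _ = ((β/2) * (n:ℝ)^l) * ((β/4)^r * Nat.choose n r) / Nat.choose n r := h3.symm
        _ ≤ _ := h2
        _ ≤ _ := le_trans (le_of_eq rfl) hRavg
    obtain ⟨A', hA'card, hA'⟩ := ih n ((β/4)^(r+1)) S' hreq' hS'
    have hRcard : R.card = r := (Finset.mem_powersetCard.mp hRmem).2
    refine ⟨fun i => Fin.cases R A' i, fun i => ?_, fun p hp => ?_⟩
    · refine Fin.cases ?_ ?_ i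
      · simpa using hRcard
      · intro j; simpa using hA'card j
    · have htail : Fin.tail p ∈ S' := by
        apply hA'
        intro j
        have := hp j.succ
        simpa [Fin.tail] using this
      have hp0 : p 0 ∈ R := by simpa using hp 0
      simp only [hS'def, Finset.mem_filter] at htail
      have : p 0 ∈ D (Fin.tail p) := htail.2 hp0
      simp only [hD, Finset.mem_filter, Finset.mem_univ, true_and] at this
      rwa [Fin.cons_self_tail] at this

lemma req_of (r : ℕ) (hr : 0 < r) :
    ∀ (l : ℕ) (β : ℝ) (n : ℕ), 0 < β → β ≤ 1 →
    (4*r : ℝ) ≤ (β/4)^((r+2)^l) * n → Req r l β n := by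
  intro l
  induction l with
  | zero => intro β n hβ _ _; exact hβ
  | succ l ih =>
    intro β n hβ hβ1 hcond
    have hbase : (0:ℝ) ≤ β/4 := by linarith
    have hb1 : β/4 ≤ 1 := by linarith
    have hn0 : (0:ℝ) ≤ n := Nat.cast_nonneg n
    constructor
    · have hE : 1 ≤ (r+2)^(l+1) := Nat.one_le_pow _ _ (by omega)
      have hpow : (β/4)^((r+2)^(l+1)) ≤ β := by
        calc (β/4)^((r+2)^(l+1)) ≤ (β/4)^1 := pow_le_pow_of_le_one hbase hb1 hE
          _ = β/4 := pow_one _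
          _ ≤ β := by linarith
      calc (4*r:ℝ) ≤ (β/4)^((r+2)^(l+1)) * n := hcond
        _ ≤ β * n := mul_le_mul_of_nonneg_right hpow hn0
    · apply ih
      · positivity
      · calc (β/4)^(r+1) ≤ 1^(r+1) := pow_le_pow_left₀ hbase hb1 _
          _ = 1 := one_pow _
      · have h1 : (β/4)^(r+2) ≤ (β/4)^(r+1)/4 := by
          have he : (β/4)^(r+2) = (β/4)^(r+1) * (β/4) := by ring
          rw [he]
          have h2 : (β/4)^(r+1) * (β/4) ≤ (β/4)^(r+1) * (1/4) :=
            mul_le_mul_of_nonneg_left (by linarith) (by positivity)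
          linarith
        have h2 : ((β/4)^(r+2))^((r+2)^l) ≤ ((β/4)^(r+1)/4)^((r+2)^l) :=
          pow_le_pow_left₀ (by positivity) h1 _
        have h3 : ((β/4)^(r+2))^((r+2)^l) = (β/4)^((r+2)^(l+1)) := by
          rw [← pow_mul, ← pow_succ']
        calc (4*r:ℝ) ≤ (β/4)^((r+2)^(l+1)) * n := hcond
          _ = ((β/4)^(r+2))^((r+2)^l) * n := by rw [h3]
          _ ≤ ((β/4)^(r+1)/4)^((r+2)^l) * n := mul_le_mul_of_nonneg_right h2 hn0

lemma injOn_map {γ δ : Type*} [DecidableEq γ] [DecidableEq δ] [Fintype γ] [Fintype δ] [Nonempty δ]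
    (s : Finset γ) (t : Finset δ) (h : s.card ≤ t.card) :
    ∃ ψ : γ → δ, Set.InjOn ψ ↑s ∧ ∀ a ∈ s, ψ a ∈ t := by
  classical
  have hcard : Fintype.card ↥s ≤ Fintype.card ↥t := by simpa using h
  obtain ⟨emb⟩ := Function.Embedding.nonempty_of_card_le hcard
  refine ⟨fun a => if ha : a ∈ s then ((emb ⟨a, ha⟩ : ↥t) : δ) else Classical.arbitrary δ, ?_, ?_⟩
  · intro a ha b hb hab
    rw [Finset.mem_coe] at ha hb
    simp only [dif_pos ha, dif_pos hb] at hab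
    have := emb.injective (Subtype.ext hab)
    exact congrArg Subtype.val this
  · intro a ha
    simp only [dif_pos ha]
    exact (emb ⟨a, ha⟩).2

lemma ramsey_mem {V : Type*} [DecidableEq V] [Fintype V]
    (H : FinsetHypergraph V) (l r : ℕ) (hr : 0 < r) (hunif : H.IsUniform l)
    (g : V → Fin l)
    (hpartite : ∀ e ∈ H.edges, ∀ a ∈ e, ∀ b ∈ e, g a = g b → a = b)
    (hsize : ∀ i : Fin l, (Finset.univ.filter (fun v => g v = i)).card ≤ r)
    (m n : ℕ) (hm : 1 ≤ m) (hn : 1 ≤ n) (hA : Req r l (1/(m:ℝ)) n)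
    (χ : Finset (Fin (l*n)) → Fin m) : H.HasMonoCopyIn (l*n) χ := by
  classical
  have hnne : Nonempty (Fin n) := ⟨⟨0, hn⟩⟩
  set eqv : Fin l × Fin n ≃ Fin (l*n) := finProdFinEquiv with heqv
  set E : (Fin l → Fin n) → Finset (Fin (l*n)) :=
    fun p => Finset.univ.image (fun i => eqv (i, p i)) with hE
  have hsum : (Finset.univ : Finset (Fin l → Fin n)).card
      = ∑ x ∈ (Finset.univ : Finset (Fin m)),
        (Finset.univ.filter (fun p : Fin l → Fin n => χ (E p) = x)).card :=
    Finset.card_eq_sum_card_fiberwise (fun _ _ => Finset.mem_univ _)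
  have hmne : (Finset.univ : Finset (Fin m)).Nonempty := ⟨⟨0, hm⟩, Finset.mem_univ _⟩
  obtain ⟨x, -, hx⟩ := avg_real (Finset.univ : Finset (Fin m))
      (fun x => (Finset.univ.filter (fun p : Fin l → Fin n => χ (E p) = x)).card)
      ((n:ℝ)^l) hmne (by
        rw [show ∑ x ∈ (Finset.univ : Finset (Fin m)),
            (((Finset.univ.filter (fun p : Fin l → Fin n => χ (E p) = x)).card : ℕ):ℝ)
            = (((Finset.univ : Finset (Fin l → Fin n)).card : ℕ) : ℝ) by
          rw [hsum]; push_cast; ring]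
        simp [Finset.card_univ, Fintype.card_fun])
  have hβS : (1/(m:ℝ)) * (n:ℝ)^l
      ≤ ((Finset.univ.filter (fun p : Fin l → Fin n => χ (E p) = x)).card : ℝ) := by
    rw [Finset.card_univ, Fintype.card_fin] at hx
    calc (1/(m:ℝ)) * (n:ℝ)^l = (n:ℝ)^l / m := by ring
      _ ≤ _ := hx
  obtain ⟨A, hAcard, hbox⟩ := box r hr l n (1/(m:ℝ)) _ hA hβS
  -- injections from parts into the A i
  have hψ : ∀ i : Fin l, ∃ ψ : V → Fin n,
      Set.InjOn ψ ↑(Finset.univ.filter (fun v => g v = i)) ∧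
      ∀ v ∈ Finset.univ.filter (fun v => g v = i), ψ v ∈ A i := by
    intro i
    exact injOn_map _ _ (by rw [hAcard i]; exact hsize i)
  choose ψ hψinj hψmem using hψ
  set f : V → Fin (l*n) := fun v => eqv (g v, ψ (g v) v) with hf
  have hfinj : Function.Injective f := by
    intro u v huv
    have h := eqv.injective huv
    have h1 : g u = g v := congrArg Prod.fst h
    have h2 : ψ (g u) u = ψ (g v) v := congrArg Prod.snd h
    rw [← h1] at h2
    refine hψinj (g u) ?_ ?_ h2
    · rw [Finset.mem_coe, Finset.mem_filter]; exact ⟨Finset.mem_univ _, rfl⟩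
    · rw [Finset.mem_coe, Finset.mem_filter]; exact ⟨Finset.mem_univ _, h1.symm⟩
  refine ⟨f, x, hfinj, ?_⟩
  intro e he
  have hecard : e.card = l := hunif e he
  have hinj_e : Set.InjOn g ↑e := fun a ha b hb hab =>
    hpartite e he a (Finset.mem_coe.mp ha) b (Finset.mem_coe.mp hb) hab
  have himg : e.image g = Finset.univ := by
    apply Finset.eq_univ_of_card
    rw [Finset.card_image_of_injOn hinj_e, hecard, Fintype.card_fin]
  have hvi : ∀ i : Fin l, ∃ v, v ∈ e ∧ g v = i := by
    intro i
    have : i ∈ e.image g := by rw [himg]; exact Finset.mem_univ i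
    simpa [Finset.mem_image] using this
  choose vv hvv1 hvv2 using hvi
  set p : Fin l → Fin n := fun i => ψ i (vv i) with hp
  have hpmem : ∀ i, p i ∈ A i := by
    intro i
    apply hψmem i
    rw [Finset.mem_filter]
    exact ⟨Finset.mem_univ _, hvv2 i⟩
  have hEp : E p = e.image f := by
    apply Finset.Subset.antisymm
    · intro z hz
      simp only [hE, Finset.mem_image, Finset.mem_univ, true_and] at hz
      obtain ⟨i, hi⟩ := hz
      rw [Finset.mem_image]
      refine ⟨vv i, hvv1 i, ?_⟩
      rw [← hi, hf]
      simp only [hp]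
      congr 1
      rw [Prod.mk.injEq]
      refine ⟨hvv2 i, ?_⟩
      rw [hvv2 i]
    · intro z hz
      rw [Finset.mem_image] at hz
      obtain ⟨v, hv, hvz⟩ := hz
      simp only [hE, Finset.mem_image, Finset.mem_univ, true_and]
      refine ⟨g v, ?_⟩
      rw [← hvz, hf]
      simp only [hp]
      congr 2
      exact congrArg (ψ (g v)) (hpartite e he (vv (g v)) (hvv1 _) v hv (hvv2 (g v)))
  rw [← hEp]
  have := hbox p hpmem
  simp only [Finset.mem_filter, Finset.mem_univ, true_and] at this
  exact this


lemma exists_good_pi {n l k m : ℕ} (hm : 1 ≤ m)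
    (L : Finset (Fin n) → Finset ℕ) (hL : ∀ e : Finset (Fin n), e.card = l → (L e).card = k)
    (χ : Finset (Fin n) → Fin m)
    (hcount : Nat.choose n l * (m-1)^k < m^k) :
    ∃ π : ℕ → Fin m, ∀ e : Finset (Fin n), e.card = l → ∃ col ∈ L e, π col = χ e := by
  classical
  set Edges := Finset.powersetCard l (Finset.univ : Finset (Fin n)) with hEdges
  have hmemE : ∀ e : Finset (Fin n), e.card = l → e ∈ Edges := fun e he =>
    Finset.mem_powersetCard.mpr ⟨Finset.subset_univ e, he⟩
  rcases Finset.eq_empty_or_nonempty Edges with hE | hEne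
  · refine ⟨fun _ => ⟨0, hm⟩, fun e he => absurd (hmemE e he) (by rw [hE]; simp)⟩
  · set T := Edges.biUnion L with hT
    have hsubT : ∀ e ∈ Edges, L e ⊆ T := fun e he => Finset.subset_biUnion_of_mem L he
    set Bad : Finset (Fin n) → Finset (↥T → Fin m) := fun e =>
      Finset.univ.filter (fun π => ∀ c : ↥T, (c:ℕ) ∈ L e → π c ≠ χ e) with hBad
    have hkT : k ≤ T.card := by
      obtain ⟨e₀, he₀⟩ := hEne
      have := Finset.card_le_card (hsubT e₀ he₀)
      rwa [hL e₀ (Finset.mem_powersetCard.mp he₀).2] at this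
    have hBadcard : ∀ e ∈ Edges, (Bad e).card = (m-1)^k * m^(T.card - k) := by
      intro e he
      have hBeq : Bad e = Fintype.piFinset (fun c : ↥T =>
          if (c:ℕ) ∈ L e then Finset.univ.erase (χ e) else Finset.univ) := by
        ext π
        simp only [hBad, Finset.mem_filter, Finset.mem_univ, true_and, Fintype.mem_piFinset]
        refine forall_congr' fun c => ?_
        by_cases hc : (c:ℕ) ∈ L e
        · simp [hc, Finset.mem_erase, and_comm]
        · simp [hc]
      rw [hBeq, Fintype.card_piFinset]
      have hcards : ∀ c : ↥T, (if (c:ℕ) ∈ L e then Finset.univ.erase (χ e) else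
          (Finset.univ : Finset (Fin m))).card = if (c:ℕ) ∈ L e then m-1 else m := by
        intro c
        by_cases hc : (c:ℕ) ∈ L e
        · simp [hc, Finset.card_erase_of_mem]
        · simp [hc]
      calc ∏ c : ↥T, (if (c:ℕ) ∈ L e then Finset.univ.erase (χ e) else
              (Finset.univ : Finset (Fin m))).card
          = ∏ c : ↥T, (if (c:ℕ) ∈ L e then m-1 else m) := by
            exact Finset.prod_congr rfl fun c _ => hcards c
        _ = (∏ _c ∈ Finset.univ.filter (fun c : ↥T => (c:ℕ) ∈ L e), (m-1)) *
            (∏ _c ∈ Finset.univ.filter (fun c : ↥T => ¬ (c:ℕ) ∈ L e), m) :=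
            Finset.prod_ite _ _
        _ = (m-1)^((Finset.univ.filter (fun c : ↥T => (c:ℕ) ∈ L e)).card) *
            m^((Finset.univ.filter (fun c : ↥T => ¬ (c:ℕ) ∈ L e)).card) := by
            rw [Finset.prod_const, Finset.prod_const]
        _ = (m-1)^k * m^(T.card - k) := by
            have hfa : (Finset.univ.filter (fun c : ↥T => (c:ℕ) ∈ L e)).card = k := by
              rw [Finset.univ_eq_attach, Finset.filter_attach (fun x => x ∈ L e) T,
                Finset.card_map, Finset.card_attach]
              have : T.filter (fun x => x ∈ L e) = L e := by
                ext x
                simp only [Finset.mem_filter]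
                exact ⟨fun h => h.2, fun h => ⟨hsubT e he h, h⟩⟩
              rw [this, hL e (Finset.mem_powersetCard.mp he).2]
            have hfb := Finset.card_filter_add_card_filter_not
              (s := (Finset.univ : Finset ↥T)) (p := fun c : ↥T => (c:ℕ) ∈ L e)
            rw [hfa] at hfb
            have hTcard : (Finset.univ : Finset ↥T).card = T.card := by
              simp [Finset.card_univ]
            have hfbcard : (Finset.univ.filter (fun c : ↥T => ¬ (c:ℕ) ∈ L e)).card
                = T.card - k := by omega
            rw [hfa, hfbcard]
    have hEdgescard : Edges.card = Nat.choose n l := by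
      rw [hEdges, Finset.card_powersetCard, Finset.card_univ, Fintype.card_fin]
    have hTot : Fintype.card (↥T → Fin m) = m^(T.card) := by
      rw [Fintype.card_fun, Fintype.card_fin, Fintype.card_coe]
    have hunion : (Edges.biUnion Bad).card < Fintype.card (↥T → Fin m) := by
      calc (Edges.biUnion Bad).card ≤ ∑ e ∈ Edges, (Bad e).card := Finset.card_biUnion_le
        _ = ∑ e ∈ Edges, (m-1)^k * m^(T.card - k) := Finset.sum_congr rfl hBadcard
        _ = Edges.card * ((m-1)^k * m^(T.card - k)) := by rw [Finset.sum_const, smul_eq_mul]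
        _ = (Nat.choose n l * (m-1)^k) * m^(T.card - k) := by rw [hEdgescard]; ring
        _ < m^k * m^(T.card - k) := by
            exact (Nat.mul_lt_mul_right (Nat.pow_pos hm)).mpr hcount
        _ = m^(T.card) := by rw [← pow_add]; congr 1; omega
        _ = Fintype.card (↥T → Fin m) := hTot.symm
    have hnotall : ¬ ((Finset.univ : Finset (↥T → Fin m)) ⊆ Edges.biUnion Bad) := by
      intro hs
      have := Finset.card_le_card hs
      rw [Finset.card_univ] at this
      omega
    obtain ⟨π₀, -, hπ₀⟩ := Finset.not_subset.mp hnotall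
    refine ⟨fun col => if h : col ∈ T then π₀ ⟨col, h⟩ else ⟨0, hm⟩, ?_⟩
    intro e he
    have heE : e ∈ Edges := hmemE e he
    have hnb : π₀ ∉ Bad e := fun hbad => hπ₀ (Finset.mem_biUnion.mpr ⟨e, heE, hbad⟩)
    simp only [hBad, Finset.mem_filter, Finset.mem_univ, true_and] at hnb
    push_neg at hnb
    obtain ⟨c, hc1, hc2⟩ := hnb
    refine ⟨(c:ℕ), hc1, ?_⟩
    simp only [dif_pos c.2, Subtype.coe_eta]
    exact hc2

lemma numeric_count (Aa Dd ll k n : ℕ) (hA : 1 ≤ Aa) (hD : 1 ≤ Dd) (hl : 1 ≤ ll)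
    (hn : n ≤ Aa * k^Dd) (hk : Aa^ll + 4*(Dd*ll+1)^2 + 2 ≤ k) :
    1 ≤ ⌊(((Dd*ll+1:ℕ):ℝ))⁻¹ * (k:ℝ) / Real.log k⌋₊ ∧
    Nat.choose n ll * ((⌊(((Dd*ll+1:ℕ):ℝ))⁻¹ * (k:ℝ) / Real.log k⌋₊) - 1)^k
      < (⌊(((Dd*ll+1:ℕ):ℝ))⁻¹ * (k:ℝ) / Real.log k⌋₊)^k := by
  have hk2 : 2 ≤ k := by nlinarith [Nat.one_le_pow ll Aa hA]
  have hk1R : (1:ℝ) < k := by exact_mod_cast lt_of_lt_of_le one_lt_two (by exact_mod_cast hk2)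
  have hk0R : (0:ℝ) < k := by linarith
  have hlog : 0 < Real.log k := Real.log_pos hk1R
  set q : ℝ := ((Dd*ll+1:ℕ):ℝ) with hq
  have hq1 : (1:ℝ) ≤ q := by
    rw [hq]; exact_mod_cast Nat.succ_le_succ (Nat.zero_le _)
  have hq0 : (0:ℝ) < q := by linarith
  -- sqrt facts
  have hsq : 2*q ≤ Real.sqrt k := by
    rw [show (2*q) = Real.sqrt ((2*q)^2) by rw [Real.sqrt_sq (by positivity)]]
    apply Real.sqrt_le_sqrt
    have : ((4*(Dd*ll+1)^2 : ℕ):ℝ) ≤ (k:ℝ) := by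
      exact_mod_cast le_trans (by omega) hk
    calc (2*q)^2 = ((4*(Dd*ll+1)^2 : ℕ):ℝ) := by rw [hq]; push_cast; ring
      _ ≤ (k:ℝ) := this
  have hlogle : Real.log k ≤ 2 * Real.sqrt k := by
    have h1 : Real.log (Real.sqrt k) ≤ Real.sqrt k - 1 :=
      Real.log_le_sub_one_of_pos (Real.sqrt_pos.mpr hk0R)
    have h2 : Real.log (Real.sqrt k) = Real.log k / 2 :=
      Real.log_sqrt (le_of_lt hk0R)
    linarith [Real.sqrt_nonneg (k:ℝ)]
  have hqlogk : q * Real.log k ≤ (k:ℝ) := by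
    have hss : Real.sqrt k * Real.sqrt k = (k:ℝ) := Real.mul_self_sqrt (le_of_lt hk0R)
    nlinarith [Real.sqrt_nonneg (k:ℝ)]
  set m := ⌊q⁻¹ * (k:ℝ) / Real.log k⌋₊ with hmdef
  have hm1 : 1 ≤ m := by
    apply Nat.le_floor
    rw [Nat.cast_one, le_div_iff₀ hlog, one_mul]
    rw [inv_mul_eq_div, le_div_iff₀ hq0]
    linarith
  refine ⟨hm1, ?_⟩
  rcases eq_or_lt_of_le hm1 with hmeq | hm2
  · rw [← hmeq]
    simp only [Nat.sub_self]
    rw [Nat.zero_pow (by omega), Nat.mul_zero, Nat.one_pow]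
    omega
  · -- m ≥ 2
    have hm2' : 2 ≤ m := hm2
    have hm0R : (0:ℝ) < m := by exact_mod_cast lt_of_lt_of_le Nat.zero_lt_one hm1
    have hmub : (m:ℝ) ≤ q⁻¹ * (k:ℝ) / Real.log k := Nat.floor_le (by positivity)
    have haux : q⁻¹ * (k:ℝ) / Real.log k = (k:ℝ) / (q * Real.log k) := by
      field_simp
    have hkm : q * Real.log k ≤ (k:ℝ)/m := by
      rw [haux] at hmub
      have hql : (0:ℝ) < q * Real.log k := by positivity
      calc q * Real.log k = (k:ℝ) / ((k:ℝ) / (q * Real.log k)) := by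
            field_simp
        _ ≤ (k:ℝ)/m := by
            apply div_le_div_of_nonneg_left (le_of_lt hk0R) hm0R hmub
    -- real inequality
    have h1 : (Nat.choose n ll : ℝ) ≤ (Aa:ℝ)^ll * (k:ℝ)^(Dd*ll) := by
      calc (Nat.choose n ll : ℝ) ≤ (n:ℝ)^ll := by exact_mod_cast Nat.choose_le_pow n ll
        _ ≤ ((Aa * k^Dd : ℕ):ℝ)^ll := by
            apply pow_le_pow_left₀ (by positivity)
            exact_mod_cast hn
        _ = (Aa:ℝ)^ll * (k:ℝ)^(Dd*ll) := by push_cast; rw [mul_pow, ← pow_mul]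
    have h2 : ((m:ℝ)-1)^k ≤ (m:ℝ)^k * Real.exp (-((k:ℝ)/m)) := by
      have he1 : (m:ℝ)-1 = (m:ℝ) * (1 - 1/m) := by field_simp
      have he2 : (1:ℝ) - 1/m ≤ Real.exp (-(1/m)) := by
        have := Real.add_one_le_exp (-(1/(m:ℝ)))
        linarith
      have he3 : ((1:ℝ) - 1/m)^k ≤ (Real.exp (-(1/m)))^k := by
        apply pow_le_pow_left₀ _ he2
        rw [sub_nonneg]
        rw [div_le_one hm0R]
        exact_mod_cast hm1
      have he4 : (Real.exp (-(1/(m:ℝ))))^k = Real.exp (-((k:ℝ)/m)) := by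
        rw [← Real.exp_nat_mul]
        congr 1
        rw [mul_neg, mul_one_div]
      calc ((m:ℝ)-1)^k = (m:ℝ)^k * ((1:ℝ) - 1/m)^k := by rw [he1, mul_pow]
        _ ≤ (m:ℝ)^k * (Real.exp (-(1/m)))^k := by
            apply mul_le_mul_of_nonneg_left he3 (by positivity)
        _ = (m:ℝ)^k * Real.exp (-((k:ℝ)/m)) := by rw [he4]
    have h3 : Real.exp (-((k:ℝ)/m)) ≤ ((k:ℝ)^(Dd*ll+1))⁻¹ := by
      have hp : q * Real.log k = Real.log ((k:ℝ)^(Dd*ll+1)) := by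
        rw [Real.log_pow, hq]
      have : -((k:ℝ)/m) ≤ -(Real.log ((k:ℝ)^(Dd*ll+1))) := by
        rw [← hp]; linarith
      calc Real.exp (-((k:ℝ)/m)) ≤ Real.exp (-(Real.log ((k:ℝ)^(Dd*ll+1)))) :=
            Real.exp_le_exp.mpr this
        _ = ((k:ℝ)^(Dd*ll+1))⁻¹ := by
            rw [Real.exp_neg, Real.exp_log (by positivity)]
    have hAk : (Aa:ℝ)^ll < (k:ℝ) := by
      have : Aa^ll < k := by omega
      exact_mod_cast this
    have hfinal : (Nat.choose n ll : ℝ) * ((m:ℝ)-1)^k < (m:ℝ)^k := by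
      have hc0 : (0:ℝ) ≤ (Nat.choose n ll : ℝ) := by positivity
      have hm1R : (0:ℝ) ≤ (m:ℝ) - 1 := by
        rw [sub_nonneg]; exact_mod_cast hm1
      calc (Nat.choose n ll : ℝ) * ((m:ℝ)-1)^k
          ≤ ((Aa:ℝ)^ll * (k:ℝ)^(Dd*ll)) * ((m:ℝ)^k * Real.exp (-((k:ℝ)/m))) := by
            apply mul_le_mul h1 h2 (by positivity) (by positivity)
        _ ≤ ((Aa:ℝ)^ll * (k:ℝ)^(Dd*ll)) * ((m:ℝ)^k * ((k:ℝ)^(Dd*ll+1))⁻¹) := by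
            apply mul_le_mul_of_nonneg_left _ (by positivity)
            exact mul_le_mul_of_nonneg_left h3 (by positivity)
        _ = (m:ℝ)^k * ((Aa:ℝ)^ll / (k:ℝ)) := by
            rw [pow_succ]
            field_simp
        _ < (m:ℝ)^k * 1 := by
            apply mul_lt_mul_of_pos_left _ (by positivity)
            rw [div_lt_one hk0R]
            exact hAk
        _ = (m:ℝ)^k := by ring
    have hcast : ((Nat.choose n ll * (m - 1)^k : ℕ):ℝ) < (((m:ℕ)^k : ℕ):ℝ) := by
      push_cast [Nat.cast_sub hm1]
      exact hfinal
    exact_mod_cast hcast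

lemma ramsey_le_poly {V : Type*} [DecidableEq V] [Fintype V]
    (H : FinsetHypergraph V) (l r : ℕ) (hr : 0 < r) (hunif : H.IsUniform l)
    (g : V → Fin l)
    (hpartite : ∀ e ∈ H.edges, ∀ a ∈ e, ∀ b ∈ e, g a = g b → a = b)
    (hsize : ∀ i : Fin l, (Finset.univ.filter (fun v => g v = i)).card ≤ r)
    (m : ℕ) (hm : 1 ≤ m) :
    ∀ χ : Finset (Fin (l * (4*r*(4*m)^((r+2)^l)))) → Fin m,
      H.HasMonoCopyIn (l * (4*r*(4*m)^((r+2)^l))) χ := by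
  intro χ
  have hmR : (0:ℝ) < m := by exact_mod_cast hm
  have h4D : 1 ≤ (4*m)^((r+2)^l) := Nat.one_le_pow _ _ (by omega)
  have hn1 : 1 ≤ 4*r*(4*m)^((r+2)^l) := by nlinarith
  have hreq : Req r l (1/(m:ℝ)) (4*r*(4*m)^((r+2)^l)) := by
    apply req_of r hr l
    · positivity
    · rw [div_le_one hmR]; exact_mod_cast hm
    · have hrw : ((1:ℝ)/m/4) = ((4*(m:ℝ)))⁻¹ := by
        rw [one_div, div_eq_mul_inv, ← mul_inv, mul_comm]
      rw [hrw]
      have hcast : (((4*r*(4*m)^((r+2)^l)) : ℕ):ℝ) = 4*(r:ℝ)*(4*(m:ℝ))^((r+2)^l) := by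
        push_cast; ring
      rw [hcast, inv_pow]
      have hne : ((4*(m:ℝ))^((r+2)^l)) ≠ 0 := by positivity
      field_simp
      exact le_refl _
  exact ramsey_mem H l r hr hunif g hpartite hsize m _ hm hn1 hreq χ

lemma list_mem_of_ramsey_mem {V : Type*} [DecidableEq V] [Fintype V]
    (H : FinsetHypergraph V) (l k : ℕ) (hunif : H.IsUniform l) (hk : 1 ≤ k) (n : ℕ)
    (hn : ∀ χ : Finset (Fin n) → Fin k, H.HasMonoCopyIn n χ) :
    ∃ L : Finset (Fin n) → Finset ℕ,
      (∀ e : Finset (Fin n), e.card = l → (L e).card = k) ∧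
      ∀ c : Finset (Fin n) → ℕ, (∀ e : Finset (Fin n), e.card = l → c e ∈ L e) →
        H.HasMonoCopyIn n c := by
  classical
  refine ⟨fun _ => Finset.range k, fun e _ => Finset.card_range k, ?_⟩
  intro co hco
  set χ : Finset (Fin n) → Fin k := fun e => if h : co e < k then ⟨co e, h⟩ else ⟨0, hk⟩ with hχ
  obtain ⟨f, y, hf, hmono⟩ := hn χ
  refine ⟨f, (y:ℕ), hf, ?_⟩
  intro e he
  have hcard : (e.image f).card = l := by
    rw [Finset.card_image_of_injective _ hf]; exact hunif e he
  have hlt := hco (e.image f) hcard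
  rw [Finset.mem_range] at hlt
  have h2 := hmono e he
  simp only [hχ, dif_pos hlt] at h2
  exact congrArg Fin.val h2

theorem list_ramsey_partite {V : Type*} [DecidableEq V] [Fintype V]
    (H : FinsetHypergraph V) (l r : ℕ) (hl : 2 ≤ l) (hr : 0 < r) (hunif : H.IsUniform l)
    (g : V → Fin l)
    (hpartite : ∀ e ∈ H.edges, ∀ a ∈ e, ∀ b ∈ e, g a = g b → a = b)
    (hsize : ∀ i : Fin l, (Finset.univ.filter (fun v => g v = i)).card ≤ r) :
    ∃ c : ℝ, 0 < c ∧ ∃ k₀ : ℕ, ∀ k : ℕ, k₀ ≤ k →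
      H.ramsey ⌊c * (k : ℝ) / Real.log k⌋₊ ≤ H.listRamsey l k ∧
      H.listRamsey l k ≤ H.ramsey k := by
  classical
  set D := (r+2)^l with hDdef
  have hl1 : 1 ≤ l := le_trans one_le_two hl
  have hD1 : 1 ≤ D := Nat.one_le_pow _ _ (by omega)
  set A := l * (4*r*4^D) with hAdef
  have h4D : 1 ≤ 4^D := Nat.one_le_pow _ _ (by omega)
  have hA1 : 1 ≤ A := by
    have : 0 < A := by rw [hAdef]; positivity
    omega
  have hAl : 1 ≤ A^l := Nat.one_le_pow _ _ (by omega)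
  have hramsey_le : ∀ m, 1 ≤ m → H.ramsey m ≤ A * m^D := by
    intro m hm
    have h : H.ramsey m ≤ l * (4*r*(4*m)^D) :=
      Nat.sInf_le (ramsey_le_poly H l r hr hunif g hpartite hsize m hm)
    calc H.ramsey m ≤ l * (4*r*(4*m)^D) := h
      _ = A * m^D := by rw [hAdef, Nat.mul_pow]; ring
  refine ⟨(((D*l+1:ℕ):ℝ))⁻¹, by positivity, A^l + 4*(D*l+1)^2 + 2, ?_⟩
  intro k hk
  have hk1 : 1 ≤ k := by omega
  have hramsne : { n : ℕ | ∀ c : Finset (Fin n) → Fin k, H.HasMonoCopyIn n c }.Nonempty :=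
    ⟨l * (4*r*(4*k)^D), by exact fun χ => ramsey_le_poly H l r hr hunif g hpartite hsize k hk1 χ⟩
  have hmemlist := list_mem_of_ramsey_mem H l k hunif hk1 (H.ramsey k)
    (by exact Nat.sInf_mem hramsne)
  have hupper : H.listRamsey l k ≤ H.ramsey k := Nat.sInf_le hmemlist
  refine ⟨?_, hupper⟩
  have hlistne : { n : ℕ | ∃ L : Finset (Fin n) → Finset ℕ,
      (∀ e : Finset (Fin n), e.card = l → (L e).card = k) ∧
      ∀ c : Finset (Fin n) → ℕ, (∀ e : Finset (Fin n), e.card = l → c e ∈ L e) →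
        H.HasMonoCopyIn n c }.Nonempty := ⟨H.ramsey k, hmemlist⟩
  have hstar : ∃ L : Finset (Fin (H.listRamsey l k)) → Finset ℕ,
      (∀ e : Finset (Fin (H.listRamsey l k)), e.card = l → (L e).card = k) ∧
      ∀ c : Finset (Fin (H.listRamsey l k)) → ℕ,
        (∀ e : Finset (Fin (H.listRamsey l k)), e.card = l → c e ∈ L e) →
        H.HasMonoCopyIn (H.listRamsey l k) c := Nat.sInf_mem hlistne
  obtain ⟨L, hLcard, hLall⟩ := hstar
  have hNle : H.listRamsey l k ≤ A * k^D := le_trans hupper (hramsey_le k hk1)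
  obtain ⟨hm1, hcount⟩ := numeric_count A D l k (H.listRamsey l k) hA1 hD1 hl1 hNle hk
  apply Nat.sInf_le
  show ∀ χ : Finset (Fin (H.listRamsey l k)) →
      Fin ⌊(((D*l+1:ℕ):ℝ))⁻¹ * (k:ℝ) / Real.log k⌋₊,
    H.HasMonoCopyIn (H.listRamsey l k) χ
  intro χ
  obtain ⟨π, hπ⟩ := exists_good_pi hm1 L hLcard χ hcount
  set co : Finset (Fin (H.listRamsey l k)) → ℕ :=
    fun e => if h : e.card = l then (hπ e h).choose else 0 with hco
  have hcmem : ∀ e : Finset (Fin (H.listRamsey l k)), e.card = l → co e ∈ L e := by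
    intro e h
    simp only [hco, dif_pos h]
    exact (hπ e h).choose_spec.1
  have hcval : ∀ e : Finset (Fin (H.listRamsey l k)), e.card = l → π (co e) = χ e := by
    intro e h
    simp only [hco, dif_pos h]
    exact (hπ e h).choose_spec.2
  obtain ⟨f, x, hf, hmono⟩ := hLall co hcmem
  rcases H.edges.eq_empty_or_nonempty with hemp | hne2
  · exact ⟨f, ⟨0, hm1⟩, hf, fun e he => absurd he (by rw [hemp]; simp)⟩
  · refine ⟨f, π x, hf, ?_⟩
    intro e he
    have hcard : (e.image f).card = l := by
      rw [Finset.card_image_of_injective _ hf]; exact hunif e he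
    have h2 := hcval (e.image f) hcard
    rw [hmono e he] at h2
    exact h2.symm
end
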